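/- Let R be a commutative integral domain with identity, Γ a discrete group, G an ample Hausdorff groupoid, and c : G → Γ a continuous cocycle such that there is a dense subset X ⊆ G⁰ with the property that the group ring R(c⁻¹(e) ∩ G_x^x) has no zero-divisors and only trivial units for all x ∈ X. If (m, n) ∈ A_R(G)_g × A_R(G)_{g⁻¹} is a normaliser of D_R(G), then supp(m) is a compact open bisection of G contained in c⁻¹(g), and supp(n) = supp(m)⁻¹. -/

import Mathlib

structure GroupoidStruct (G : Type*) where
  src : G → G
  rng : G → G
  inv : G → G
  mul : G → G → G
  rng_src : ∀ a, rng (src a) = src a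
  src_src : ∀ a, src (src a) = src a
  src_rng : ∀ a, src (rng a) = rng a
  rng_rng : ∀ a, rng (rng a) = rng a
  src_inv : ∀ a, src (inv a) = rng a
  rng_inv : ∀ a, rng (inv a) = src a
  src_mul : ∀ a b, src a = rng b → src (mul a b) = src b
  rng_mul : ∀ a b, src a = rng b → rng (mul a b) = rng a
  mul_assoc' : ∀ a b c, src a = rng b → src b = rng c →
    mul (mul a b) c = mul a (mul b c)
  unit_mul : ∀ a, mul (rng a) a = a
  mul_unit : ∀ a, mul a (src a) = a
  inv_mul : ∀ a, mul (inv a) a = src a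
  mul_inv : ∀ a, mul a (inv a) = rng a
  inv_inv : ∀ a, inv (inv a) = a

namespace GroupoidStruct

variable {G : Type*} (𝒢 : GroupoidStruct G)

/-- The unit space `G⁰` of the groupoid. -/
def units : Set G := {x | 𝒢.src x = x}

/-- The set product `UV` of two subsets of the groupoid. -/
def setMul (U V : Set G) : Set G :=
  {η | ∃ a ∈ U, ∃ b ∈ V, 𝒢.src a = 𝒢.rng b ∧ 𝒢.mul a b = η}

/-- A bisection: a set on which the source and range maps are injective. -/
def IsBisection (U : Set G) : Prop := Set.InjOn 𝒢.src U ∧ Set.InjOn 𝒢.rng U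

/-- A cocycle into a group: a groupoid homomorphism. -/
def IsCocycle {Γ : Type*} [Group Γ] (c : G → Γ) : Prop :=
  ∀ a b, 𝒢.src a = 𝒢.rng b → c (𝒢.mul a b) = c a * c b

end GroupoidStruct

/-- A Hausdorff étale topological groupoid (the Hausdorff condition is imposed via a
`T2Space` instance on `G`). -/
structure EtaleGroupoid (G : Type*) [TopologicalSpace G] extends GroupoidStruct G where
  continuous_src : Continuous src
  continuous_rng : Continuous rng
  continuous_inv : Continuous inv
  continuousOn_mul : ContinuousOn (fun p : G × G => mul p.1 p.2) {p | src p.1 = rng p.2}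
  etale_src : IsLocalHomeomorph src
  etale_rng : IsLocalHomeomorph rng

/-- An ample groupoid: an étale groupoid whose unit space has a basis of compact open sets. -/
structure AmpleGroupoid (G : Type*) [TopologicalSpace G] extends EtaleGroupoid G where
  ample : ∀ x, src x = x → ∀ U : Set G, IsOpen U → x ∈ U →
    ∃ K : Set G, IsCompact K ∧ IsOpen K ∧ x ∈ K ∧ K ⊆ U ∧ ∀ y ∈ K, src y = y

/-- The convolution product on `R`-valued functions on the groupoid `G`:
`(f * g)(η) = ∑_{αβ = η} f(α) g(β)`. -/
noncomputable def conv {G : Type*} (𝒢 : GroupoidStruct G) {R : Type*} [CommRing R]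
    (f g : G → R) : G → R :=
  fun η => ∑ᶠ (p : G × G) (_ : 𝒢.src p.1 = 𝒢.rng p.2 ∧ 𝒢.mul p.1 p.2 = η), f p.1 * g p.2

/-- The carrier of the Steinberg algebra `A_R(G)`: locally constant compactly supported
`R`-valued functions on `G`. -/
def SteinbergSet {G : Type*} [TopologicalSpace G] (𝒢 : GroupoidStruct G)
    (R : Type*) [CommRing R] : Set (G → R) :=
  {f | IsLocallyConstant f ∧ IsCompact (Function.support f)}

/-- The diagonal subalgebra `D_R(G)`: elements of `A_R(G)` supported on the unit space. -/
def DiagSet {G : Type*} [TopologicalSpace G] (𝒢 : GroupoidStruct G)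
    (R : Type*) [CommRing R] : Set (G → R) :=
  {f | f ∈ SteinbergSet 𝒢 R ∧ Function.support f ⊆ GroupoidStruct.units 𝒢}

/-- `f` is homogeneous of degree `g` for the grading induced by the cocycle `c`,
i.e. `supp f ⊆ c⁻¹(g)`. -/
def InGrade {G : Type*} {Γ : Type*} [Group Γ] {R : Type*} [CommRing R]
    (c : G → Γ) (g : Γ) (f : G → R) : Prop :=
  ∀ η, f η ≠ 0 → c η = g

/-- A normaliser of the diagonal `D_R(G)` in `A_R(G)`: a pair `(m, n)` with
`m D n ∪ n D m ⊆ D`, `mnm = m` and `nmn = n`. -/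
def IsNormaliser {G : Type*} [TopologicalSpace G] (𝒢 : GroupoidStruct G)
    (R : Type*) [CommRing R] (m n : G → R) : Prop :=
  m ∈ SteinbergSet 𝒢 R ∧ n ∈ SteinbergSet 𝒢 R ∧
  (∀ d ∈ DiagSet 𝒢 R, conv 𝒢 m (conv 𝒢 d n) ∈ DiagSet 𝒢 R ∧
      conv 𝒢 n (conv 𝒢 d m) ∈ DiagSet 𝒢 R) ∧
  conv 𝒢 m (conv 𝒢 n m) = m ∧ conv 𝒢 n (conv 𝒢 m n) = n

/-- The involution `f*(η) = (f(η⁻¹))*` on `R`-valued functions on the groupoid. -/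
def starF {G : Type*} (𝒢 : GroupoidStruct G) {R : Type*} [CommRing R] [StarRing R]
    (f : G → R) : G → R :=
  fun η => star (f (𝒢.inv η))

/-- The group `c⁻¹(e) ∩ G_x^x`: elements of the isotropy group at `x` on which the
cocycle `c` takes the value `e`. -/
def IsoSet {G : Type*} (𝒢 : GroupoidStruct G) {Γ : Type*} [Group Γ] (c : G → Γ)
    (x : G) : Set G :=
  {η | c η = 1 ∧ 𝒢.src η = x ∧ 𝒢.rng η = x}

/-- The group ring `R(c⁻¹(e) ∩ G_x^x)` (realised as finitely supported functions on `G`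
supported in `c⁻¹(e) ∩ G_x^x` with convolution) has no zero-divisors and only trivial units
(units of the form `u·g` for `u` a unit of `R` and `g` a group element). -/
def GroupRingNice {G : Type*} (𝒢 : GroupoidStruct G) {Γ : Type*} [Group Γ] (c : G → Γ)
    (x : G) (R : Type*) [CommRing R] : Prop :=
  (∀ f g : G → R, (Function.support f).Finite → (Function.support g).Finite →
      Function.support f ⊆ IsoSet 𝒢 c x → Function.support g ⊆ IsoSet 𝒢 c x →
      conv 𝒢 f g = 0 → f = 0 ∨ g = 0) ∧
  (∀ f g : G → R, (Function.support f).Finite → (Function.support g).Finite →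
      Function.support f ⊆ IsoSet 𝒢 c x → Function.support g ⊆ IsoSet 𝒢 c x →
      conv 𝒢 f g = Set.indicator {x} (fun _ => (1 : R)) →
      conv 𝒢 g f = Set.indicator {x} (fun _ => (1 : R)) →
      ∃ (u : R) (η : G), IsUnit u ∧ η ∈ IsoSet 𝒢 c x ∧
        f = Set.indicator {η} (fun _ => u))

open Function Set

namespace GroupoidStruct

variable {G : Type*} (𝒮 : GroupoidStruct G)

lemma src_mem_units (a : G) : 𝒮.src a ∈ 𝒮.units := 𝒮.src_src a

lemma rng_mem_units (a : G) : 𝒮.rng a ∈ 𝒮.units := 𝒮.src_rng a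

lemma unit_src {x : G} (hx : x ∈ 𝒮.units) : 𝒮.src x = x := hx

lemma unit_rng {x : G} (hx : x ∈ 𝒮.units) : 𝒮.rng x = x := by
  have : 𝒮.rng (𝒮.src x) = 𝒮.src x := 𝒮.rng_src x
  rwa [unit_src 𝒮 hx] at this

lemma unit_mul' {x q : G} (h : 𝒮.rng q = x) : 𝒮.mul x q = q := by
  rw [← h]; exact 𝒮.unit_mul q

lemma mul_unit' {x q : G} (h : 𝒮.src q = x) : 𝒮.mul q x = q := by
  rw [← h]; exact 𝒮.mul_unit q

/-- uniqueness of inverse -/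
lemma eq_inv_of {a b : G} (h1 : 𝒮.src a = 𝒮.rng b) (h2 : 𝒮.mul a b = 𝒮.rng a) :
    b = 𝒮.inv a := by
  have h3 : 𝒮.mul (𝒮.inv a) (𝒮.mul a b) = b := by
    rw [← 𝒮.mul_assoc' _ _ _ (𝒮.src_inv a) h1, 𝒮.inv_mul, 𝒮.unit_mul' h1.symm]
  rw [h2, 𝒮.mul_unit' (𝒮.src_inv a)] at h3
  exact h3.symm

lemma inv_unit {x : G} (hx : x ∈ 𝒮.units) : 𝒮.inv x = x := by
  have h1 : 𝒮.src x = 𝒮.rng x := by rw [𝒮.unit_src hx, 𝒮.unit_rng hx]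
  have h2 : 𝒮.mul x x = 𝒮.rng x := by
    rw [𝒮.unit_rng hx, 𝒮.mul_unit' (𝒮.unit_src hx)]
  exact (𝒮.eq_inv_of h1 h2).symm

lemma inv_mul_rev {p q : G} (h : 𝒮.src p = 𝒮.rng q) :
    𝒮.inv (𝒮.mul p q) = 𝒮.mul (𝒮.inv q) (𝒮.inv p) := by
  symm
  apply 𝒮.eq_inv_of
  · rw [𝒮.src_mul _ _ h, 𝒮.rng_mul _ _ (by rw [𝒮.src_inv, 𝒮.rng_inv]; exact h.symm), 𝒮.rng_inv]
  · have c1 : 𝒮.src (𝒮.mul p q) = 𝒮.rng (𝒮.inv q) := by rw [𝒮.src_mul _ _ h, 𝒮.rng_inv]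
    have c2 : 𝒮.src (𝒮.inv q) = 𝒮.rng (𝒮.inv p) := by rw [𝒮.src_inv, 𝒮.rng_inv, h]
    rw [← 𝒮.mul_assoc' _ _ _ c1 c2]
    have h4 : 𝒮.mul (𝒮.mul p q) (𝒮.inv q) = p := by
      rw [𝒮.mul_assoc' _ _ _ h (𝒮.rng_inv q).symm, 𝒮.mul_inv, 𝒮.mul_unit' h]
    rw [h4, 𝒮.mul_inv, 𝒮.rng_mul _ _ h]

lemma cancel_left {p q q' : G} (h : 𝒮.src p = 𝒮.rng q) (h' : 𝒮.src p = 𝒮.rng q')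
    (heq : 𝒮.mul p q = 𝒮.mul p q') : q = q' := by
  have e1 : 𝒮.mul (𝒮.inv p) (𝒮.mul p q) = q := by
    rw [← 𝒮.mul_assoc' _ _ _ (𝒮.src_inv p) h, 𝒮.inv_mul, 𝒮.unit_mul' h.symm]
  have e2 : 𝒮.mul (𝒮.inv p) (𝒮.mul p q') = q' := by
    rw [← 𝒮.mul_assoc' _ _ _ (𝒮.src_inv p) h', 𝒮.inv_mul, 𝒮.unit_mul' h'.symm]
  rw [← e1, heq, e2]

lemma cancel_right {p p' q : G} (h : 𝒮.src p = 𝒮.rng q) (h' : 𝒮.src p' = 𝒮.rng q)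
    (heq : 𝒮.mul p q = 𝒮.mul p' q) : p = p' := by
  have e1 : 𝒮.mul (𝒮.mul p q) (𝒮.inv q) = p := by
    rw [𝒮.mul_assoc' _ _ _ h (𝒮.rng_inv q).symm, 𝒮.mul_inv, 𝒮.mul_unit' h]
  have e2 : 𝒮.mul (𝒮.mul p' q) (𝒮.inv q) = p' := by
    rw [𝒮.mul_assoc' _ _ _ h' (𝒮.rng_inv q).symm, 𝒮.mul_inv, 𝒮.mul_unit' h']
  rw [← e1, heq, e2]

lemma cocycle_unit {Γ : Type*} [Group Γ] {c : G → Γ} (hc : 𝒮.IsCocycle c) {x : G}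
    (hx : x ∈ 𝒮.units) : c x = 1 := by
  have h2 := hc x x (by rw [𝒮.unit_src hx, 𝒮.unit_rng hx])
  rw [𝒮.unit_mul' (𝒮.unit_rng hx)] at h2
  exact (mul_eq_left (a := c x) (b := c x)).mp h2.symm

lemma cocycle_inv {Γ : Type*} [Group Γ] {c : G → Γ} (hc : 𝒮.IsCocycle c) (a : G) :
    c (𝒮.inv a) = (c a)⁻¹ := by
  have h2 := hc a (𝒮.inv a) (𝒮.rng_inv a).symm
  rw [𝒮.mul_inv, cocycle_unit 𝒮 hc (𝒮.rng_mem_units a)] at h2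
  exact eq_inv_of_mul_eq_one_right h2.symm

end GroupoidStruct
section ConvBasics

open Function Set GroupoidStruct

variable {G : Type*} {R : Type*} [CommRing R] (𝒮 : GroupoidStruct G)

lemma rng_invmul {p η : G} (hp : 𝒮.rng p = 𝒮.rng η) :
    𝒮.rng (𝒮.mul (𝒮.inv p) η) = 𝒮.src p := by
  rw [𝒮.rng_mul _ _ (by rw [𝒮.src_inv]; exact hp), 𝒮.rng_inv]

lemma mul_invmul {p η : G} (hp : 𝒮.rng p = 𝒮.rng η) :
    𝒮.mul p (𝒮.mul (𝒮.inv p) η) = η := by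
  rw [← 𝒮.mul_assoc' _ _ _ (𝒮.rng_inv p).symm (by rw [𝒮.src_inv]; exact hp), 𝒮.mul_inv,
    𝒮.unit_mul' hp.symm]

lemma src_mulinv {q η : G} (hq : 𝒮.src q = 𝒮.src η) :
    𝒮.src (𝒮.mul η (𝒮.inv q)) = 𝒮.rng q := by
  rw [𝒮.src_mul _ _ (by rw [𝒮.rng_inv]; exact hq.symm), 𝒮.src_inv]

lemma mulinv_mul {q η : G} (hq : 𝒮.src q = 𝒮.src η) :
    𝒮.mul (𝒮.mul η (𝒮.inv q)) q = η := by
  rw [𝒮.mul_assoc' _ _ _ (by rw [𝒮.rng_inv]; exact hq.symm) (𝒮.src_inv q), 𝒮.inv_mul,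
    𝒮.mul_unit' hq.symm]

lemma conv_apply_left (a b : G → R) (η : G) :
    conv 𝒮 a b η = ∑ᶠ p ∈ {p : G | 𝒮.rng p = 𝒮.rng η}, a p * b (𝒮.mul (𝒮.inv p) η) := by
  have himg : {z : G × G | 𝒮.src z.1 = 𝒮.rng z.2 ∧ 𝒮.mul z.1 z.2 = η}
      = (fun p => (p, 𝒮.mul (𝒮.inv p) η)) '' {p : G | 𝒮.rng p = 𝒮.rng η} := by
    ext z; constructor
    · rintro ⟨h1, h2⟩
      refine ⟨z.1, ?_, ?_⟩
      · show 𝒮.rng z.1 = 𝒮.rng η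
        rw [← h2, 𝒮.rng_mul _ _ h1]
      · have hz2 : z.2 = 𝒮.mul (𝒮.inv z.1) η := by
          rw [← h2, ← 𝒮.mul_assoc' _ _ _ (𝒮.src_inv z.1) h1, 𝒮.inv_mul, 𝒮.unit_mul' h1.symm]
        exact Prod.ext rfl hz2.symm
    · rintro ⟨p, hp, rfl⟩
      exact ⟨(rng_invmul 𝒮 hp).symm, mul_invmul 𝒮 hp⟩
  have hinj : Set.InjOn (fun p : G => (p, 𝒮.mul (𝒮.inv p) η)) {p : G | 𝒮.rng p = 𝒮.rng η} :=
    fun p _ p' _ h => congrArg Prod.fst h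
  calc conv 𝒮 a b η
      = ∑ᶠ z ∈ {z : G × G | 𝒮.src z.1 = 𝒮.rng z.2 ∧ 𝒮.mul z.1 z.2 = η},
          a z.1 * b z.2 := rfl
    _ = ∑ᶠ p ∈ {p : G | 𝒮.rng p = 𝒮.rng η}, a p * b (𝒮.mul (𝒮.inv p) η) := by
        rw [himg, finsum_mem_image hinj]

lemma conv_apply_right (a b : G → R) (η : G) :
    conv 𝒮 a b η = ∑ᶠ q ∈ {q : G | 𝒮.src q = 𝒮.src η}, a (𝒮.mul η (𝒮.inv q)) * b q := by
  have himg : {z : G × G | 𝒮.src z.1 = 𝒮.rng z.2 ∧ 𝒮.mul z.1 z.2 = η}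
      = (fun q => (𝒮.mul η (𝒮.inv q), q)) '' {q : G | 𝒮.src q = 𝒮.src η} := by
    ext z; constructor
    · rintro ⟨h1, h2⟩
      refine ⟨z.2, ?_, ?_⟩
      · show 𝒮.src z.2 = 𝒮.src η
        rw [← h2, 𝒮.src_mul _ _ h1]
      · have hz1 : z.1 = 𝒮.mul η (𝒮.inv z.2) := by
          rw [← h2, 𝒮.mul_assoc' _ _ _ h1 (𝒮.rng_inv z.2).symm, 𝒮.mul_inv, 𝒮.mul_unit' h1]
        exact Prod.ext hz1.symm rfl
    · rintro ⟨q, hq, rfl⟩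
      exact ⟨src_mulinv 𝒮 hq, mulinv_mul 𝒮 hq⟩
  have hinj : Set.InjOn (fun q : G => (𝒮.mul η (𝒮.inv q), q)) {q : G | 𝒮.src q = 𝒮.src η} :=
    fun p _ p' _ h => congrArg Prod.snd h
  calc conv 𝒮 a b η
      = ∑ᶠ z ∈ {z : G × G | 𝒮.src z.1 = 𝒮.rng z.2 ∧ 𝒮.mul z.1 z.2 = η},
          a z.1 * b z.2 := rfl
    _ = ∑ᶠ q ∈ {q : G | 𝒮.src q = 𝒮.src η}, a (𝒮.mul η (𝒮.inv q)) * b q := by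
        rw [himg, finsum_mem_image hinj]

lemma conv_eq_sum_left (a b : G → R) (η : G) (T : Finset G)
    (hT1 : ∀ p ∈ T, 𝒮.rng p = 𝒮.rng η)
    (hT2 : ∀ p, 𝒮.rng p = 𝒮.rng η → a p * b (𝒮.mul (𝒮.inv p) η) ≠ 0 → p ∈ T) :
    conv 𝒮 a b η = ∑ p ∈ T, a p * b (𝒮.mul (𝒮.inv p) η) := by
  rw [conv_apply_left]
  apply finsum_mem_eq_sum_of_inter_support_eq
  ext p
  constructor
  · rintro ⟨hr, hs⟩; exact ⟨hT2 p hr hs, hs⟩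
  · rintro ⟨ht, hs⟩; exact ⟨hT1 p ht, hs⟩

lemma conv_eq_zero_of (a b : G → R) (η : G)
    (h : ∀ p q, 𝒮.src p = 𝒮.rng q → 𝒮.mul p q = η → a p * b q = 0) : conv 𝒮 a b η = 0 := by
  rw [conv_apply_left]
  apply finsum_mem_of_eqOn_zero
  intro p hp
  exact h p (𝒮.mul (𝒮.inv p) η) (rng_invmul 𝒮 hp).symm (mul_invmul 𝒮 hp)

lemma exists_of_conv_ne_zero {a b : G → R} {η : G} (h : conv 𝒮 a b η ≠ 0) :
    ∃ p q, 𝒮.src p = 𝒮.rng q ∧ 𝒮.mul p q = η ∧ a p ≠ 0 ∧ b q ≠ 0 := by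
  by_contra hcon
  push_neg at hcon
  refine h (conv_eq_zero_of 𝒮 a b η fun p q h1 h2 => ?_)
  by_cases ha : a p = 0
  · rw [ha, zero_mul]
  · rw [hcon p q h1 h2 ha, mul_zero]

lemma conv_diag_left (d b : G → R) (hd : Function.support d ⊆ 𝒮.units) (η : G) :
    conv 𝒮 d b η = d (𝒮.rng η) * b η := by
  rw [conv_apply_left, finsum_mem_def]
  have hval : Set.indicator {p : G | 𝒮.rng p = 𝒮.rng η}
      (fun p => d p * b (𝒮.mul (𝒮.inv p) η)) (𝒮.rng η) = d (𝒮.rng η) * b η := by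
    rw [Set.indicator_of_mem (by simp [𝒮.rng_rng η])]
    rw [𝒮.inv_unit (𝒮.rng_mem_units η), 𝒮.unit_mul η]
  rw [← hval]
  apply finsum_eq_single
  intro p hpne
  rcases eq_or_ne (𝒮.rng p) (𝒮.rng η) with hr | hr
  · rw [Set.indicator_of_mem (show p ∈ {p : G | 𝒮.rng p = 𝒮.rng η} from hr)]
    by_cases hdp : d p = 0
    · rw [hdp, zero_mul]
    · exact absurd (by rw [← 𝒮.unit_rng (hd hdp), hr]) hpne
  · rw [Set.indicator_of_notMem (show p ∉ {p : G | 𝒮.rng p = 𝒮.rng η} from hr)]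

lemma conv_diag_right (a d : G → R) (hd : Function.support d ⊆ 𝒮.units) (η : G) :
    conv 𝒮 a d η = a η * d (𝒮.src η) := by
  rw [conv_apply_right, finsum_mem_def]
  have hval : Set.indicator {q : G | 𝒮.src q = 𝒮.src η}
      (fun q => a (𝒮.mul η (𝒮.inv q)) * d q) (𝒮.src η) = a η * d (𝒮.src η) := by
    rw [Set.indicator_of_mem (by simp [𝒮.src_src η])]
    rw [𝒮.inv_unit (𝒮.src_mem_units η), 𝒮.mul_unit η]
  rw [← hval]
  apply finsum_eq_single
  intro q hqne
  rcases eq_or_ne (𝒮.src q) (𝒮.src η) with hr | hr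
  · rw [Set.indicator_of_mem (show q ∈ {q : G | 𝒮.src q = 𝒮.src η} from hr)]
    by_cases hdq : d q = 0
    · rw [hdq, mul_zero]
    · exact absurd (by rw [← 𝒮.unit_src (hd hdq), hr]) hqne
  · rw [Set.indicator_of_notMem (show q ∉ {q : G | 𝒮.src q = 𝒮.src η} from hr)]

end ConvBasics
section ConvAssoc

open Function Set GroupoidStruct

variable {G : Type*} {R : Type*} [CommRing R] (𝒮 : GroupoidStruct G)

lemma conv_assoc (a b c : G → R)
    (ha : ∀ y, ({p : G | 𝒮.rng p = y} ∩ Function.support a).Finite)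
    (hb : ∀ y, ({p : G | 𝒮.rng p = y} ∩ Function.support b).Finite) :
    conv 𝒮 (conv 𝒮 a b) c = conv 𝒮 a (conv 𝒮 b c) := by
  classical
  funext η
  set x := 𝒮.rng η with hx
  set Ta := (ha x).toFinset with hTa
  have hTa_rng : ∀ p ∈ Ta, 𝒮.rng p = x := fun p hp => ((ha x).mem_toFinset.mp hp).1
  have hTa_mem : ∀ p, 𝒮.rng p = x → a p ≠ 0 → p ∈ Ta := fun p h1 h2 =>
    (ha x).mem_toFinset.mpr ⟨h1, h2⟩
  set Tb : G → Finset G := fun t => (hb (𝒮.src t)).toFinset with hTb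
  have hTb_rng : ∀ t, ∀ q ∈ Tb t, 𝒮.rng q = 𝒮.src t := fun t q hq =>
    ((hb (𝒮.src t)).mem_toFinset.mp hq).1
  have hTb_mem : ∀ t q, 𝒮.rng q = 𝒮.src t → b q ≠ 0 → q ∈ Tb t := fun t q h1 h2 =>
    (hb (𝒮.src t)).mem_toFinset.mpr ⟨h1, h2⟩
  set Tball := Ta.biUnion (fun t => Tb t) with hTball
  set TP := ((Ta ×ˢ Tball).image (fun z : G × G => 𝒮.mul z.1 z.2)).filter
      (fun p => 𝒮.rng p = x) with hTP
  have hTP_rng : ∀ p ∈ TP, 𝒮.rng p = x := fun p hp => (Finset.mem_filter.mp hp).2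
  -- LHS
  have hLHS : conv 𝒮 (conv 𝒮 a b) c η
      = ∑ p ∈ TP, (conv 𝒮 a b) p * c (𝒮.mul (𝒮.inv p) η) := by
    apply conv_eq_sum_left
    · exact fun p hp => hTP_rng p hp
    · intro p h1 h2
      have hab : conv 𝒮 a b p ≠ 0 := left_ne_zero_of_mul h2
      obtain ⟨p₁, q, hpq1, hpq2, hp₁, hq⟩ := exists_of_conv_ne_zero 𝒮 hab
      have hrp₁ : 𝒮.rng p₁ = x := by rw [hx, ← h1, ← hpq2, 𝒮.rng_mul _ _ hpq1]
      have hp₁Ta : p₁ ∈ Ta := hTa_mem p₁ hrp₁ hp₁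
      refine Finset.mem_filter.mpr ⟨Finset.mem_image.mpr ⟨(p₁, q), ?_, hpq2⟩, h1⟩
      exact Finset.mem_product.mpr ⟨hp₁Ta,
        Finset.mem_biUnion.mpr ⟨p₁, hp₁Ta, hTb_mem p₁ q hpq1.symm hq⟩⟩
  have hexp : ∀ p ∈ TP, conv 𝒮 a b p = ∑ p₁ ∈ Ta, a p₁ * b (𝒮.mul (𝒮.inv p₁) p) := by
    intro p hp
    apply conv_eq_sum_left
    · intro p₁ hp₁; rw [hTa_rng p₁ hp₁, hTP_rng p hp]
    · intro p₁ h1 h2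
      exact hTa_mem p₁ (by rw [h1, hTP_rng p hp]) (left_ne_zero_of_mul h2)
  -- RHS
  have hRHS : conv 𝒮 a (conv 𝒮 b c) η
      = ∑ p₁ ∈ Ta, a p₁ * (conv 𝒮 b c) (𝒮.mul (𝒮.inv p₁) η) := by
    apply conv_eq_sum_left
    · exact fun p hp => hTa_rng p hp
    · exact fun p h1 h2 => hTa_mem p h1 (left_ne_zero_of_mul h2)
  have hexp2 : ∀ p₁ ∈ Ta, (conv 𝒮 b c) (𝒮.mul (𝒮.inv p₁) η)
      = ∑ q ∈ Tb p₁, b q * c (𝒮.mul (𝒮.inv q) (𝒮.mul (𝒮.inv p₁) η)) := by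
    intro p₁ hp₁
    have hr : 𝒮.rng (𝒮.mul (𝒮.inv p₁) η) = 𝒮.src p₁ := rng_invmul 𝒮 (hTa_rng p₁ hp₁)
    apply conv_eq_sum_left
    · intro q hq; rw [hTb_rng p₁ q hq, hr]
    · intro q h1 h2
      exact hTb_mem p₁ q (by rw [h1, hr]) (left_ne_zero_of_mul h2)
  rw [hLHS, hRHS]
  have hL2 : ∑ p ∈ TP, conv 𝒮 a b p * c (𝒮.mul (𝒮.inv p) η)
      = ∑ p ∈ TP, ∑ p₁ ∈ Ta, a p₁ * b (𝒮.mul (𝒮.inv p₁) p) * c (𝒮.mul (𝒮.inv p) η) := by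
    refine Finset.sum_congr rfl fun p hp => ?_
    rw [hexp p hp, Finset.sum_mul]
  have hR2 : ∑ p₁ ∈ Ta, a p₁ * conv 𝒮 b c (𝒮.mul (𝒮.inv p₁) η)
      = ∑ p₁ ∈ Ta, ∑ q ∈ Tb p₁, a p₁ * (b q * c (𝒮.mul (𝒮.inv q) (𝒮.mul (𝒮.inv p₁) η))) := by
    refine Finset.sum_congr rfl fun p₁ hp₁ => ?_
    rw [hexp2 p₁ hp₁, Finset.mul_sum]
  rw [hL2, hR2, Finset.sum_comm]
  apply Finset.sum_congr rfl
  intro p₁ hp₁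
  have hrp₁ : 𝒮.rng p₁ = x := hTa_rng p₁ hp₁
  set e : G → G := fun p => 𝒮.mul (𝒮.inv p₁) p with he
  set F2 : G → R := fun q => a p₁ * b q * c (𝒮.mul (𝒮.inv q) (𝒮.mul (𝒮.inv p₁) η)) with hF2
  have hinj : ∀ p ∈ TP, ∀ p' ∈ TP, e p = e p' → p = p' := by
    intro p hp p' hp' hee
    refine 𝒮.cancel_left (q := p) (q' := p') ?_ ?_ hee
    · rw [𝒮.src_inv, hrp₁, hTP_rng p hp]
    · rw [𝒮.src_inv, hrp₁, hTP_rng p' hp']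
  have hstep1 : ∑ q ∈ TP.image e, F2 q
      = ∑ p ∈ TP, a p₁ * b (𝒮.mul (𝒮.inv p₁) p) * c (𝒮.mul (𝒮.inv p) η) := by
    rw [Finset.sum_image hinj]
    apply Finset.sum_congr rfl
    intro p hp
    have hrp : 𝒮.rng p = x := hTP_rng p hp
    have hcomp1 : 𝒮.src (𝒮.inv p₁) = 𝒮.rng p := by rw [𝒮.src_inv, hrp₁, hrp]
    have hinvrev : 𝒮.inv (e p) = 𝒮.mul (𝒮.inv p) p₁ := by
      rw [he]
      show 𝒮.inv (𝒮.mul (𝒮.inv p₁) p) = _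
      rw [𝒮.inv_mul_rev hcomp1, 𝒮.inv_inv]
    have hcarg : 𝒮.mul (𝒮.inv (e p)) (𝒮.mul (𝒮.inv p₁) η) = 𝒮.mul (𝒮.inv p) η := by
      rw [hinvrev]
      rw [𝒮.mul_assoc' _ _ _ (by rw [𝒮.src_inv, hrp, hrp₁])
        (by rw [rng_invmul 𝒮 (show 𝒮.rng p₁ = 𝒮.rng η from hrp₁)])]
      rw [mul_invmul 𝒮 (show 𝒮.rng p₁ = 𝒮.rng η from hrp₁)]
    rw [hF2]
    show a p₁ * b (e p) * c (𝒮.mul (𝒮.inv (e p)) (𝒮.mul (𝒮.inv p₁) η)) = _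
    rw [hcarg]
  have hsub : Tb p₁ ⊆ TP.image e := by
    intro q hq
    have hrq : 𝒮.rng q = 𝒮.src p₁ := hTb_rng p₁ q hq
    have hpTP : 𝒮.mul p₁ q ∈ TP := by
      refine Finset.mem_filter.mpr ⟨Finset.mem_image.mpr ⟨(p₁, q), ?_, rfl⟩, ?_⟩
      · exact Finset.mem_product.mpr ⟨hp₁, Finset.mem_biUnion.mpr ⟨p₁, hp₁, hq⟩⟩
      · rw [𝒮.rng_mul _ _ hrq.symm, hrp₁]
    refine Finset.mem_image.mpr ⟨𝒮.mul p₁ q, hpTP, ?_⟩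
    show 𝒮.mul (𝒮.inv p₁) (𝒮.mul p₁ q) = q
    rw [← 𝒮.mul_assoc' _ _ _ (𝒮.src_inv p₁) hrq.symm, 𝒮.inv_mul, 𝒮.unit_mul' hrq]
  have hstep2 : ∑ q ∈ Tb p₁, F2 q = ∑ q ∈ TP.image e, F2 q := by
    apply Finset.sum_subset hsub
    intro q hq hqn
    obtain ⟨p, hp, hep⟩ := Finset.mem_image.mp hq
    have hrq : 𝒮.rng q = 𝒮.src p₁ := by
      rw [← hep]
      exact rng_invmul 𝒮 (by rw [hrp₁, hTP_rng p hp])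
    by_cases hbq : b q = 0
    · rw [hF2]; show a p₁ * b q * _ = 0; rw [hbq, mul_zero, zero_mul]
    · exact absurd (hTb_mem p₁ q hrq hbq) hqn
  rw [← hstep1, ← hstep2]
  apply Finset.sum_congr rfl
  intro q hq
  exact mul_assoc (a p₁) (b q) _

end ConvAssoc
section Topo

open Function Set GroupoidStruct

variable {G : Type*} [TopologicalSpace G] {R : Type*} [CommRing R]

lemma fiber_finite {f : G → G} (hf : IsLocalHomeomorph f) {K : Set G} (hK : IsCompact K)
    (y : G) : ({p | f p = y} ∩ K).Finite := by
  choose e he hfe using hf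
  obtain ⟨t, ht⟩ := hK.elim_finite_subcover (fun p : G => (e p).source)
    (fun p => (e p).open_source) (fun k _ => Set.mem_iUnion.mpr ⟨k, he k⟩)
  have hsub : {p | f p = y} ∩ K ⊆ ⋃ i ∈ t, ({p | f p = y} ∩ (e i).source) := by
    intro p ⟨hp1, hp2⟩
    obtain ⟨i, hi, hpi⟩ := Set.mem_iUnion₂.mp (ht hp2)
    exact Set.mem_iUnion₂.mpr ⟨i, hi, hp1, hpi⟩
  refine Set.Finite.subset (Set.Finite.biUnion t.finite_toSet fun i _ => ?_) hsub
  apply Set.Subsingleton.finite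
  intro p ⟨hp1, hp2⟩ p' ⟨hp'1, hp'2⟩
  apply (e i).injOn hp2 hp'2
  rw [← hfe i, hp1, hp'1]

lemma units_open (ℰ : EtaleGroupoid G) : IsOpen ℰ.units := by
  rw [isOpen_iff_forall_mem_open]
  intro u hu
  obtain ⟨e, hin, hfe⟩ := ℰ.etale_src u
  refine ⟨e.source ∩ ℰ.src ⁻¹' e.source, ?_, ?_, ?_⟩
  · rintro y ⟨hy1, hy2⟩
    have := e.injOn hy2 hy1 (by rw [← hfe]; exact ℰ.src_src y)
    exact this
  · exact e.open_source.inter (ℰ.continuous_src.isOpen_preimage _ e.open_source)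
  · refine ⟨hin, ?_⟩
    have : ℰ.src u = u := hu
    rw [Set.mem_preimage, this]
    exact hin

lemma supp_open {f : G → R} (hf : IsLocallyConstant f) : IsOpen (Function.support f) := by
  have : Function.support f = f ⁻¹' ({0}ᶜ) := by
    ext p; simp [Function.mem_support]
  rw [this]
  exact hf _

lemma isLocallyConstant_indicator {V : Set G} (hV : IsOpen V) (hVc : IsClosed V) (r : R) :
    IsLocallyConstant (Set.indicator V (fun _ => r)) := by
  rw [IsLocallyConstant.iff_exists_open]
  intro x
  by_cases hx : x ∈ V
  · exact ⟨V, hV, hx, fun y hy => by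
      rw [Set.indicator_of_mem hy, Set.indicator_of_mem hx]⟩
  · exact ⟨Vᶜ, hVc.isOpen_compl, hx, fun y hy => by
      rw [Set.indicator_of_notMem hy, Set.indicator_of_notMem hx]⟩

lemma support_indicator_one [Nontrivial R] (V : Set G) :
    Function.support (Set.indicator V (fun _ => (1 : R))) = V := by
  ext p
  by_cases hp : p ∈ V
  · simp [Function.mem_support, Set.indicator_of_mem hp, hp]
  · simp [Function.mem_support, Set.indicator_of_notMem hp, hp]

variable [T2Space G]

lemma indicator_mem_diag [Nontrivial R] (𝒜 : AmpleGroupoid G) {V : Set G} (hVk : IsCompact V)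
    (hVo : IsOpen V) (hVu : V ⊆ 𝒜.units) :
    Set.indicator V (fun _ => (1 : R)) ∈ DiagSet 𝒜.toGroupoidStruct R := by
  refine ⟨⟨isLocallyConstant_indicator hVo hVk.isClosed _, ?_⟩, ?_⟩
  · rw [support_indicator_one]; exact hVk
  · rw [support_indicator_one]; exact hVu

lemma exists_compact_open_superset (𝒜 : AmpleGroupoid G) {C : Set G} (hC : IsCompact C)
    (hCu : C ⊆ 𝒜.units) :
    ∃ K, IsCompact K ∧ IsOpen K ∧ C ⊆ K ∧ K ⊆ 𝒜.units := by
  have h : ∀ x : G, x ∈ C → ∃ K : Set G, IsCompact K ∧ IsOpen K ∧ x ∈ K ∧ K ⊆ Set.univ ∧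
      ∀ y ∈ K, 𝒜.src y = y := fun x hx =>
    𝒜.ample x (hCu hx) Set.univ isOpen_univ (Set.mem_univ x)
  choose! Kf hK1 hK2 hK3 _ hK5 using h
  obtain ⟨t, ht⟩ := hC.elim_finite_subcover (fun x : C => Kf x)
    (fun x => hK2 x x.2) (fun k hk => Set.mem_iUnion.mpr ⟨⟨k, hk⟩, hK3 k hk⟩)
  refine ⟨⋃ i ∈ t, Kf i, ?_, ?_, ht, ?_⟩
  · exact t.finite_toSet.isCompact_biUnion fun i _ => hK1 i i.2
  · exact isOpen_biUnion fun i _ => hK2 i i.2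
  · intro y hy
    obtain ⟨i, _, hyi⟩ := Set.mem_iUnion₂.mp hy
    exact hK5 i i.2 y hyi

lemma exists_separating (𝒜 : AmpleGroupoid G) {x : G} (hx : x ∈ 𝒜.units) {F : Set G}
    (hF : F.Finite) (hxF : x ∉ F) :
    ∃ V, IsCompact V ∧ IsOpen V ∧ x ∈ V ∧ V ⊆ 𝒜.units ∧ ∀ y ∈ F, y ∉ V := by
  obtain ⟨K, h1, h2, h3, h4, h5⟩ := 𝒜.ample x hx Fᶜ hF.isClosed.isOpen_compl hxF
  exact ⟨K, h1, h2, h3, fun y hy => h5 y hy, fun y hy hyK => (h4 hyK) hy⟩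

lemma perturb (ℰ : EtaleGroupoid G) {U : Set G} (hU : IsOpen U) {q q' : G} (hq : q ∈ U)
    (hq' : q' ∈ U) (hne : q ≠ q') (hsrc : ℰ.src q = ℰ.src q') {X : Set G}
    (hXd : ℰ.units ⊆ closure X) :
    ∃ u ∈ X, ∃ a ∈ U, ∃ b ∈ U, a ≠ b ∧ ℰ.src a = u ∧ ℰ.src b = u := by
  obtain ⟨e₁, he₁, hf₁⟩ := ℰ.etale_src q
  obtain ⟨e₂, he₂, hf₂⟩ := ℰ.etale_src q'
  obtain ⟨O₁, O₂, hO₁, hO₂, hqO₁, hq'O₂, hdisj⟩ := t2_separation hne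
  set A := e₁.source ∩ O₁ ∩ U with hA
  set B := e₂.source ∩ O₂ ∩ U with hB
  have hAo : IsOpen A := (e₁.open_source.inter hO₁).inter hU
  have hBo : IsOpen B := (e₂.open_source.inter hO₂).inter hU
  have hqA : q ∈ A := ⟨⟨he₁, hqO₁⟩, hq⟩
  have hq'B : q' ∈ B := ⟨⟨he₂, hq'O₂⟩, hq'⟩
  have himA : IsOpen (ℰ.src '' A) := by
    rw [hf₁]
    exact e₁.isOpen_image_of_subset_source hAo (fun y hy => hy.1.1)
  have himB : IsOpen (ℰ.src '' B) := by
    rw [hf₂]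
    exact e₂.isOpen_image_of_subset_source hBo (fun y hy => hy.1.1)
  set W := (ℰ.src '' A) ∩ (ℰ.src '' B) with hW
  have hxW : ℰ.src q ∈ W := ⟨⟨q, hqA, rfl⟩, ⟨q', hq'B, hsrc.symm⟩⟩
  have hxX : ℰ.src q ∈ closure X := hXd (ℰ.src_src q)
  obtain ⟨u, huW, huX⟩ := mem_closure_iff.mp hxX W (himA.inter himB) hxW
  obtain ⟨a, haA, hsa⟩ := huW.1
  obtain ⟨b, hbB, hsb⟩ := huW.2
  refine ⟨u, huX, a, haA.2, b, hbB.2, ?_, hsa, hsb⟩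
  intro hab
  exact (Set.disjoint_iff.mp hdisj ⟨haA.1.2, hab ▸ hbB.1.2⟩)

end Topo
section Core1

open Function Set GroupoidStruct

variable {G : Type*} {R : Type*} {Γ : Type*} [CommRing R] [Group Γ]

/-- auxiliary cancellation -/
lemma GroupoidStruct.invmul_of_mul_eq (𝒮 : GroupoidStruct G) {p q η : G}
    (h : 𝒮.src p = 𝒮.rng q) (heq : 𝒮.mul p q = η) : 𝒮.mul (𝒮.inv p) η = q := by
  rw [← heq, ← 𝒮.mul_assoc' _ _ _ (𝒮.src_inv p) h, 𝒮.inv_mul, 𝒮.unit_mul' h.symm]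

lemma GroupoidStruct.mulinv_of_mul_eq (𝒮 : GroupoidStruct G) {p q η : G}
    (h : 𝒮.src p = 𝒮.rng q) (heq : 𝒮.mul p q = η) : 𝒮.mul η (𝒮.inv q) = p := by
  rw [← heq, 𝒮.mul_assoc' _ _ _ h (𝒮.rng_inv q).symm, 𝒮.mul_inv, 𝒮.mul_unit' h]

variable (𝒮 : GroupoidStruct G) (c : G → Γ)

lemma mem_iso_iff {x η : G} : η ∈ IsoSet 𝒮 c x ↔ c η = 1 ∧ 𝒮.src η = x ∧ 𝒮.rng η = x :=
  Iff.rfl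

lemma iso_mul {x δ ε : G} (hc : 𝒮.IsCocycle c) (hδ : δ ∈ IsoSet 𝒮 c x)
    (hε : ε ∈ IsoSet 𝒮 c x) : 𝒮.mul δ ε ∈ IsoSet 𝒮 c x := by
  obtain ⟨h1, h2, h3⟩ := hδ
  obtain ⟨h4, h5, h6⟩ := hε
  have hcomp : 𝒮.src δ = 𝒮.rng ε := by rw [h2, h6]
  exact ⟨by rw [hc _ _ hcomp, h1, h4, one_mul], by rw [𝒮.src_mul _ _ hcomp, h5],
    by rw [𝒮.rng_mul _ _ hcomp, h3]⟩

lemma unit_mem_iso {x : G} (hc : 𝒮.IsCocycle c) (hx : x ∈ 𝒮.units) : x ∈ IsoSet 𝒮 c x :=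
  ⟨𝒮.cocycle_unit hc hx, 𝒮.unit_src hx, 𝒮.unit_rng hx⟩

lemma iso_unit_eq {x γ : G} (hγ : γ ∈ IsoSet 𝒮 c x) (hu : γ ∈ 𝒮.units) : γ = x := by
  rw [← hγ.2.1, 𝒮.unit_src hu]

lemma iso_not_unit {x γ : G} (hγ : γ ∈ IsoSet 𝒮 c x) (hne : γ ≠ x) : γ ∉ 𝒮.units :=
  fun hu => hne (iso_unit_eq 𝒮 c hγ hu)

/-- the scalar `λ(x,w) = ∑_{q : x → w} m(q) n(q⁻¹)`. -/
noncomputable def Lam (m n : G → R) (x w : G) : R :=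
  ∑ᶠ q ∈ {q : G | 𝒮.src q = x ∧ 𝒮.rng q = w}, m q * n (𝒮.inv q)

lemma Lam_ne_zero_witness {m n : G → R} {x w : G} (h : Lam 𝒮 m n x w ≠ 0) :
    ∃ q, 𝒮.src q = x ∧ 𝒮.rng q = w ∧ m q ≠ 0 ∧ n (𝒮.inv q) ≠ 0 := by
  by_contra hcon
  push_neg at hcon
  refine h (finsum_mem_of_eqOn_zero fun q hq => ?_)
  rcases eq_or_ne (m q) 0 with h1 | h1
  · show m q * n (𝒮.inv q) = 0; rw [h1, zero_mul]
  · show m q * n (𝒮.inv q) = 0; rw [hcon q hq.1 hq.2 h1, mul_zero]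

/-- the localized group-ring elements -/
noncomputable def phiR (m : G → R) (t : G) : G → R :=
  (IsoSet 𝒮 c (𝒮.src t)).indicator (fun η => m (𝒮.mul t η))

noncomputable def psiR (n : G → R) (t : G) : G → R :=
  (IsoSet 𝒮 c (𝒮.src t)).indicator (fun η => n (𝒮.mul η (𝒮.inv t)))

noncomputable def phiL (m : G → R) (t : G) : G → R :=
  (IsoSet 𝒮 c (𝒮.rng t)).indicator (fun η => m (𝒮.mul η t))

noncomputable def psiL (n : G → R) (t : G) : G → R :=
  (IsoSet 𝒮 c (𝒮.rng t)).indicator (fun η => n (𝒮.mul (𝒮.inv t) η))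

lemma phiR_supp (m : G → R) (t : G) : support (phiR 𝒮 c m t) ⊆ IsoSet 𝒮 c (𝒮.src t) := by
  rw [phiR, Set.support_indicator]; exact Set.inter_subset_left

lemma psiR_supp (n : G → R) (t : G) : support (psiR 𝒮 c n t) ⊆ IsoSet 𝒮 c (𝒮.src t) := by
  rw [psiR, Set.support_indicator]; exact Set.inter_subset_left

lemma phiL_supp (m : G → R) (t : G) : support (phiL 𝒮 c m t) ⊆ IsoSet 𝒮 c (𝒮.rng t) := by
  rw [phiL, Set.support_indicator]; exact Set.inter_subset_left

lemma psiL_supp (n : G → R) (t : G) : support (psiL 𝒮 c n t) ⊆ IsoSet 𝒮 c (𝒮.rng t) := by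
  rw [psiL, Set.support_indicator]; exact Set.inter_subset_left

lemma phiR_supp_finite {m : G → R} (t : G)
    (hm : ({p : G | 𝒮.src p = 𝒮.src t} ∩ support m).Finite) :
    (support (phiR 𝒮 c m t)).Finite := by
  apply Set.Finite.subset (hm.image (fun p => 𝒮.mul (𝒮.inv t) p))
  intro η hη
  have hη1 : η ∈ IsoSet 𝒮 c (𝒮.src t) := phiR_supp 𝒮 c m t hη
  have hη2 : m (𝒮.mul t η) ≠ 0 := by
    intro h0
    apply hη
    rw [phiR, Set.indicator_of_mem hη1, h0]
  have hcomp : 𝒮.src t = 𝒮.rng η := by rw [hη1.2.2]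
  refine ⟨𝒮.mul t η, ⟨?_, hη2⟩, 𝒮.invmul_of_mul_eq hcomp rfl⟩
  show 𝒮.src (𝒮.mul t η) = 𝒮.src t
  rw [𝒮.src_mul _ _ hcomp, hη1.2.1]

lemma psiR_supp_finite {n : G → R} (t : G)
    (hn : ({p : G | 𝒮.rng p = 𝒮.src t} ∩ support n).Finite) :
    (support (psiR 𝒮 c n t)).Finite := by
  apply Set.Finite.subset (hn.image (fun q => 𝒮.mul q t))
  intro η hη
  have hη1 : η ∈ IsoSet 𝒮 c (𝒮.src t) := psiR_supp 𝒮 c n t hη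
  have hη2 : n (𝒮.mul η (𝒮.inv t)) ≠ 0 := by
    intro h0
    apply hη
    rw [psiR, Set.indicator_of_mem hη1, h0]
  have hcomp : 𝒮.src η = 𝒮.rng (𝒮.inv t) := by rw [hη1.2.1, 𝒮.rng_inv]
  refine ⟨𝒮.mul η (𝒮.inv t), ⟨?_, hη2⟩, ?_⟩
  · show 𝒮.rng (𝒮.mul η (𝒮.inv t)) = 𝒮.src t
    rw [𝒮.rng_mul _ _ hcomp]
    exact hη1.2.2
  · show 𝒮.mul (𝒮.mul η (𝒮.inv t)) t = η
    rw [𝒮.mul_assoc' _ _ _ hcomp (𝒮.src_inv t), 𝒮.inv_mul, 𝒮.mul_unit' hη1.2.1]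

lemma phiL_supp_finite {m : G → R} (t : G)
    (hm : ({p : G | 𝒮.rng p = 𝒮.rng t} ∩ support m).Finite) :
    (support (phiL 𝒮 c m t)).Finite := by
  apply Set.Finite.subset (hm.image (fun p => 𝒮.mul p (𝒮.inv t)))
  intro η hη
  have hη1 : η ∈ IsoSet 𝒮 c (𝒮.rng t) := phiL_supp 𝒮 c m t hη
  have hη2 : m (𝒮.mul η t) ≠ 0 := by
    intro h0
    apply hη
    rw [phiL, Set.indicator_of_mem hη1, h0]
  have hcomp : 𝒮.src η = 𝒮.rng t := by rw [hη1.2.1]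
  refine ⟨𝒮.mul η t, ⟨?_, hη2⟩, ?_⟩
  · show 𝒮.rng (𝒮.mul η t) = 𝒮.rng t
    rw [𝒮.rng_mul _ _ hcomp, hη1.2.2]
  · exact 𝒮.mulinv_of_mul_eq hcomp rfl

lemma psiL_supp_finite {n : G → R} (t : G)
    (hn : ({p : G | 𝒮.src p = 𝒮.rng t} ∩ support n).Finite) :
    (support (psiL 𝒮 c n t)).Finite := by
  apply Set.Finite.subset (hn.image (fun q => 𝒮.mul t q))
  intro η hη
  have hη1 : η ∈ IsoSet 𝒮 c (𝒮.rng t) := psiL_supp 𝒮 c n t hη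
  have hη2 : n (𝒮.mul (𝒮.inv t) η) ≠ 0 := by
    intro h0
    apply hη
    rw [psiL, Set.indicator_of_mem hη1, h0]
  have hcomp : 𝒮.src (𝒮.inv t) = 𝒮.rng η := by rw [𝒮.src_inv, hη1.2.2]
  refine ⟨𝒮.mul (𝒮.inv t) η, ⟨?_, hη2⟩, ?_⟩
  · show 𝒮.src (𝒮.mul (𝒮.inv t) η) = 𝒮.rng t
    rw [𝒮.src_mul _ _ hcomp]
    exact hη1.2.1
  · show 𝒮.mul t (𝒮.mul (𝒮.inv t) η) = η
    rw [← 𝒮.mul_assoc' _ _ _ (𝒮.rng_inv t).symm hcomp, 𝒮.mul_inv, 𝒮.unit_mul' hη1.2.2]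

/-- convolution of two functions supported in an isotropy group vanishes off it -/
lemma conv_iso_zero (hc : 𝒮.IsCocycle c) {a b : G → R} {w γ : G}
    (ha : support a ⊆ IsoSet 𝒮 c w) (hb : support b ⊆ IsoSet 𝒮 c w)
    (hγ : γ ∉ IsoSet 𝒮 c w) : conv 𝒮 a b γ = 0 := by
  apply conv_eq_zero_of
  intro p q h1 h2
  rcases eq_or_ne (a p) 0 with h3 | h3
  · rw [h3, zero_mul]
  rcases eq_or_ne (b q) 0 with h4 | h4
  · rw [h4, mul_zero]
  exact absurd (h2 ▸ iso_mul 𝒮 c hc (ha h3) (hb h4)) hγ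

/-- generic reindexing along an injection for `finsum_mem` -/
lemma finsum_reindex_aux {A B : Set G} (F F₂ : G → R) (g : G → G)
    (hinj : B.InjOn g) (himg : ∀ q ∈ B, g q ∈ A) (hsupp : ∀ δ ∈ A, F δ ≠ 0 → δ ∈ g '' B)
    (hval : ∀ q ∈ B, F (g q) = F₂ q) :
    ∑ᶠ δ ∈ A, F δ = ∑ᶠ q ∈ B, F₂ q := by
  have h1 : ∑ᶠ δ ∈ A, F δ = ∑ᶠ δ ∈ g '' B, F δ := by
    apply finsum_mem_inter_support_eq'
    intro δ hδ
    exact ⟨fun hA => hsupp δ hA hδ, fun ⟨q, hq, he⟩ => he ▸ himg q hq⟩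
  rw [h1, finsum_mem_image hinj]
  exact finsum_mem_congr rfl hval

end Core1
section Core2

open Function Set GroupoidStruct

variable {G : Type*} [TopologicalSpace G] [T2Space G] {R : Type*} [CommRing R] [IsDomain R]
  {Γ : Type*} [Group Γ]
variable (𝒜 : AmpleGroupoid G) {c : G → Γ} {g : Γ} {m n : G → R}

lemma fib_rng {f : G → R} (hK : IsCompact (Function.support f)) (y : G) :
    ({p : G | 𝒜.rng p = y} ∩ Function.support f).Finite :=
  fiber_finite 𝒜.etale_rng hK y

lemma fib_src {f : G → R} (hK : IsCompact (Function.support f)) (y : G) :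
    ({p : G | 𝒜.src p = y} ∩ Function.support f).Finite :=
  fiber_finite 𝒜.etale_src hK y

lemma E_vanish (hnorm : IsNormaliser 𝒜.toGroupoidStruct R m n) {ζ w : G}
    (hζ : ζ ∉ 𝒜.toGroupoidStruct.units) (hw : w ∈ 𝒜.toGroupoidStruct.units) :
    ∑ᶠ q ∈ {q : G | 𝒜.src q = 𝒜.src ζ ∧ 𝒜.rng q = w},
      n (𝒜.mul ζ (𝒜.inv q)) * m q = 0 := by
  set 𝒮 := 𝒜.toGroupoidStruct with h𝒮
  set S := {q : G | 𝒮.src q = 𝒮.src ζ} ∩ Function.support m with hS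
  have hSfin : S.Finite := fib_src 𝒜 hnorm.1.2 (𝒮.src ζ)
  set Fw := (𝒮.rng '' S) \ {w} with hFw
  have hFwfin : Fw.Finite := ((hSfin.image 𝒮.rng).diff)
  obtain ⟨V, hVk, hVo, hwV, hVu, hVsep⟩ :=
    exists_separating 𝒜 hw hFwfin (fun h => h.2 rfl)
  set d := Set.indicator V (fun _ => (1 : R)) with hd
  have hdD : d ∈ DiagSet 𝒮 R := indicator_mem_diag 𝒜 hVk hVo hVu
  have hDm := (hnorm.2.2.1 d hdD).2
  have hzero : conv 𝒮 n (conv 𝒮 d m) ζ = 0 := by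
    by_contra h0
    exact hζ (hDm.2 (Function.mem_support.mpr h0))
  rw [conv_apply_right] at hzero
  have hcongr : ∑ᶠ q ∈ {q : G | 𝒮.src q = 𝒮.src ζ}, n (𝒮.mul ζ (𝒮.inv q)) * conv 𝒮 d m q
      = ∑ᶠ q ∈ {q : G | 𝒮.src q = 𝒮.src ζ}, n (𝒮.mul ζ (𝒮.inv q)) * (d (𝒮.rng q) * m q) := by
    refine finsum_mem_congr rfl fun q _ => ?_
    rw [conv_diag_left 𝒮 d m hdD.2 q]
  rw [hcongr] at hzero
  set f₁ : G → R := fun q => n (𝒮.mul ζ (𝒮.inv q)) * (d (𝒮.rng q) * m q) with hf₁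
  have hmatch : ∑ᶠ q ∈ {q : G | 𝒮.src q = 𝒮.src ζ}, f₁ q
      = ∑ᶠ q ∈ {q : G | 𝒮.src q = 𝒮.src ζ ∧ 𝒮.rng q = w}, f₁ q := by
    apply finsum_mem_inter_support_eq'
    intro q hq
    have hmq : m q ≠ 0 := by
      intro h0
      apply hq
      show n _ * (d _ * m q) = 0
      rw [h0, mul_zero, mul_zero]
    have hdq : d (𝒮.rng q) ≠ 0 := by
      intro h0
      apply hq
      show n _ * (d (𝒮.rng q) * m q) = 0
      rw [h0, zero_mul, mul_zero]
    have hrV : 𝒮.rng q ∈ V := by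
      by_contra hnV
      exact hdq (Set.indicator_of_notMem hnV _)
    constructor
    · intro hqA
      refine ⟨hqA, ?_⟩
      by_contra hne
      exact hVsep (𝒮.rng q) ⟨⟨q, ⟨hqA, hmq⟩, rfl⟩, hne⟩ hrV
    · exact fun hqB => hqB.1
  rw [hmatch] at hzero
  rw [← hzero]
  refine finsum_mem_congr rfl fun q hq => ?_
  show n _ * m q = n _ * (d (𝒮.rng q) * m q)
  have hd1 : d (𝒮.rng q) = 1 := by
    rw [hd, Set.indicator_of_mem (show 𝒮.rng q ∈ V by rw [hq.2]; exact hwV)]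
  rw [hd1, one_mul]

lemma F_vanish (hnorm : IsNormaliser 𝒜.toGroupoidStruct R m n) {ζ x : G}
    (hζ : ζ ∉ 𝒜.toGroupoidStruct.units) (hx : x ∈ 𝒜.toGroupoidStruct.units) :
    ∑ᶠ p ∈ {p : G | 𝒜.src p = x ∧ 𝒜.rng p = 𝒜.rng ζ},
      m p * n (𝒜.mul (𝒜.inv p) ζ) = 0 := by
  set 𝒮 := 𝒜.toGroupoidStruct with h𝒮
  set S := {p : G | 𝒮.rng p = 𝒮.rng ζ} ∩ Function.support m with hS
  have hSfin : S.Finite := fib_rng 𝒜 hnorm.1.2 (𝒮.rng ζ)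
  set Fx := (𝒮.src '' S) \ {x} with hFx
  have hFxfin : Fx.Finite := ((hSfin.image 𝒮.src).diff)
  obtain ⟨V, hVk, hVo, hxV, hVu, hVsep⟩ :=
    exists_separating 𝒜 hx hFxfin (fun h => h.2 rfl)
  set d := Set.indicator V (fun _ => (1 : R)) with hd
  have hdD : d ∈ DiagSet 𝒮 R := indicator_mem_diag 𝒜 hVk hVo hVu
  have hDm := (hnorm.2.2.1 d hdD).1
  have hzero : conv 𝒮 m (conv 𝒮 d n) ζ = 0 := by
    by_contra h0
    exact hζ (hDm.2 (Function.mem_support.mpr h0))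
  rw [conv_apply_left] at hzero
  have hcongr : ∑ᶠ p ∈ {p : G | 𝒮.rng p = 𝒮.rng ζ}, m p * conv 𝒮 d n (𝒮.mul (𝒮.inv p) ζ)
      = ∑ᶠ p ∈ {p : G | 𝒮.rng p = 𝒮.rng ζ}, m p * (d (𝒮.src p) * n (𝒮.mul (𝒮.inv p) ζ)) := by
    refine finsum_mem_congr rfl fun p hp => ?_
    rw [conv_diag_left 𝒮 d n hdD.2 _, rng_invmul 𝒮 hp]
  rw [hcongr] at hzero
  set f₁ : G → R := fun p => m p * (d (𝒮.src p) * n (𝒮.mul (𝒮.inv p) ζ)) with hf₁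
  have hmatch : ∑ᶠ p ∈ {p : G | 𝒮.rng p = 𝒮.rng ζ}, f₁ p
      = ∑ᶠ p ∈ {p : G | 𝒮.src p = x ∧ 𝒮.rng p = 𝒮.rng ζ}, f₁ p := by
    apply finsum_mem_inter_support_eq'
    intro p hp
    have hmp : m p ≠ 0 := by
      intro h0
      apply hp
      show m p * _ = 0
      rw [h0, zero_mul]
    have hdp : d (𝒮.src p) ≠ 0 := by
      intro h0
      apply hp
      show m p * (d (𝒮.src p) * _) = 0
      rw [h0, zero_mul, mul_zero]
    have hsV : 𝒮.src p ∈ V := by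
      by_contra hnV
      exact hdp (Set.indicator_of_notMem hnV _)
    constructor
    · intro hpA
      refine ⟨?_, hpA⟩
      by_contra hne
      exact hVsep (𝒮.src p) ⟨⟨p, ⟨hpA, hmp⟩, rfl⟩, hne⟩ hsV
    · exact fun hpB => hpB.2
  rw [hmatch] at hzero
  rw [← hzero]
  refine finsum_mem_congr rfl fun p hp => ?_
  show m p * n _ = m p * (d (𝒮.src p) * n _)
  have hd1 : d (𝒮.src p) = 1 := by
    rw [hd, Set.indicator_of_mem (show 𝒮.src p ∈ V by rw [hp.1]; exact hxV)]
  rw [hd1, one_mul]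

lemma f_diag (hnorm : IsNormaliser 𝒜.toGroupoidStruct R m n) :
    Function.support (conv 𝒜.toGroupoidStruct m n) ⊆ 𝒜.toGroupoidStruct.units ∧
    ∀ q, m q ≠ 0 → conv 𝒜.toGroupoidStruct m n (𝒜.rng q) = 1 := by
  set 𝒮 := 𝒜.toGroupoidStruct with h𝒮
  have hC : IsCompact (𝒮.rng '' Function.support n) := hnorm.2.1.2.image 𝒜.continuous_rng
  have hCu : 𝒮.rng '' Function.support n ⊆ 𝒮.units := by
    rintro y ⟨p, _, rfl⟩
    exact 𝒮.rng_mem_units p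
  obtain ⟨K, hKk, hKo, hKC, hKu⟩ := exists_compact_open_superset 𝒜 hC hCu
  set d := Set.indicator K (fun _ => (1 : R)) with hd
  have hdD : d ∈ DiagSet 𝒮 R := indicator_mem_diag 𝒜 hKk hKo hKu
  have h1 : conv 𝒮 d n = n := by
    funext η
    rw [conv_diag_left 𝒮 d n hdD.2 η]
    rcases eq_or_ne (n η) 0 with h0 | h0
    · rw [h0, mul_zero]
    · have : 𝒮.rng η ∈ K := hKC ⟨η, h0, rfl⟩
      rw [hd, Set.indicator_of_mem this, one_mul]
  have hDm := (hnorm.2.2.1 d hdD).1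
  rw [h1] at hDm
  have hfu : Function.support (conv 𝒮 m n) ⊆ 𝒮.units := hDm.2
  refine ⟨hfu, fun q hq => ?_⟩
  have hassoc : conv 𝒮 (conv 𝒮 m n) m = conv 𝒮 m (conv 𝒮 n m) :=
    conv_assoc 𝒮 m n m (fib_rng 𝒜 hnorm.1.2) (fib_rng 𝒜 hnorm.2.1.2)
  rw [hnorm.2.2.2.1] at hassoc
  have hval : conv 𝒮 (conv 𝒮 m n) m q = conv 𝒮 m n (𝒮.rng q) * m q :=
    conv_diag_left 𝒮 _ m hfu q
  rw [hassoc] at hval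
  have hsub : (conv 𝒮 m n (𝒮.rng q) - 1) * m q = 0 := by
    rw [sub_mul, one_mul, ← hval, sub_self]
  rcases mul_eq_zero.mp hsub with h | h
  · exact sub_eq_zero.mp h
  · exact absurd h hq

end Core2


section CoreH

open Function Set GroupoidStruct

variable {G : Type*} {R : Type*} [CommRing R] {Γ : Type*} [Group Γ]

lemma H_psiL_phiL {𝒮 : GroupoidStruct G} {c : G → Γ} (hc : 𝒮.IsCocycle c) {g : Γ}
    {m n : G → R} (hm : InGrade c g m) {t t' γ : G} (hct' : c t' = g)
    (hrt : 𝒮.rng t' = 𝒮.rng t) (hγ : γ ∈ IsoSet 𝒮 c (𝒮.rng t)) :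
    conv 𝒮 (psiL 𝒮 c n t) (phiL 𝒮 c m t') γ
      = ∑ᶠ q ∈ {q : G | 𝒮.src q = 𝒮.src (𝒮.mul (𝒮.inv t) (𝒮.mul γ t')) ∧ 𝒮.rng q = 𝒮.rng t},
          n (𝒮.mul (𝒮.mul (𝒮.inv t) (𝒮.mul γ t')) (𝒮.inv q)) * m q := by
  obtain ⟨hγc, hγs, hγr⟩ := hγ
  have hcomp1 : 𝒮.src γ = 𝒮.rng t' := by rw [hγs]; exact hrt.symm
  have hsγt' : 𝒮.src (𝒮.mul γ t') = 𝒮.src t' := 𝒮.src_mul _ _ hcomp1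
  have hrγt' : 𝒮.rng (𝒮.mul γ t') = 𝒮.rng t := by rw [𝒮.rng_mul _ _ hcomp1, hγr]
  have hcomp2 : 𝒮.src (𝒮.inv t) = 𝒮.rng (𝒮.mul γ t') := by rw [𝒮.src_inv, hrγt']
  have hsζ : 𝒮.src (𝒮.mul (𝒮.inv t) (𝒮.mul γ t')) = 𝒮.src t' := by
    rw [𝒮.src_mul _ _ hcomp2, hsγt']
  rw [conv_apply_left]
  apply finsum_reindex_aux _ _ (fun q => 𝒮.mul γ (𝒮.mul t' (𝒮.inv q)))
  · -- InjOn
    intro q hq q' hq' he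
    have hc1 : 𝒮.src t' = 𝒮.rng (𝒮.inv q) := by rw [𝒮.rng_inv, hq.1, hsζ]
    have hc1' : 𝒮.src t' = 𝒮.rng (𝒮.inv q') := by rw [𝒮.rng_inv, hq'.1, hsζ]
    have hcg : 𝒮.src γ = 𝒮.rng (𝒮.mul t' (𝒮.inv q)) := by
      rw [𝒮.rng_mul _ _ hc1]; exact hcomp1
    have hcg' : 𝒮.src γ = 𝒮.rng (𝒮.mul t' (𝒮.inv q')) := by
      rw [𝒮.rng_mul _ _ hc1']; exact hcomp1
    have h2 := 𝒮.cancel_left hcg hcg' he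
    have h3 := 𝒮.cancel_left hc1 hc1' h2
    have h4 := congrArg 𝒮.inv h3
    rwa [𝒮.inv_inv, 𝒮.inv_inv] at h4
  · -- maps into A
    intro q hq
    have hc1 : 𝒮.src t' = 𝒮.rng (𝒮.inv q) := by rw [𝒮.rng_inv, hq.1, hsζ]
    have hcg : 𝒮.src γ = 𝒮.rng (𝒮.mul t' (𝒮.inv q)) := by
      rw [𝒮.rng_mul _ _ hc1]; exact hcomp1
    show 𝒮.rng (𝒮.mul γ (𝒮.mul t' (𝒮.inv q))) = 𝒮.rng γ
    rw [𝒮.rng_mul _ _ hcg]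
  · -- support condition
    intro δ hδA hδne
    have hψ : psiL 𝒮 c n t δ ≠ 0 := left_ne_zero_of_mul hδne
    have hφ : phiL 𝒮 c m t' (𝒮.mul (𝒮.inv δ) γ) ≠ 0 := right_ne_zero_of_mul hδne
    have hδI : δ ∈ IsoSet 𝒮 c (𝒮.rng t) := by
      by_contra h; exact hψ (Set.indicator_of_notMem h _)
    have hεI : 𝒮.mul (𝒮.inv δ) γ ∈ IsoSet 𝒮 c (𝒮.rng t') := by
      by_contra h; exact hφ (Set.indicator_of_notMem h _)
    have hmε : m (𝒮.mul (𝒮.mul (𝒮.inv δ) γ) t') ≠ 0 := by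
      intro h0; apply hφ
      rw [phiL, Set.indicator_of_mem hεI]; exact h0
    have hδA' : 𝒮.rng δ = 𝒮.rng γ := hδA
    have hcε : 𝒮.src (𝒮.mul (𝒮.inv δ) γ) = 𝒮.rng t' := hεI.2.1
    refine ⟨𝒮.mul (𝒮.mul (𝒮.inv δ) γ) t', ⟨?_, ?_⟩, ?_⟩
    · rw [𝒮.src_mul _ _ hcε, hsζ]
    · rw [𝒮.rng_mul _ _ hcε, hεI.2.2, hrt]
    · show 𝒮.mul γ (𝒮.mul t' (𝒮.inv (𝒮.mul (𝒮.mul (𝒮.inv δ) γ) t'))) = δ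
      have hstep0 : 𝒮.inv (𝒮.mul (𝒮.mul (𝒮.inv δ) γ) t')
          = 𝒮.mul (𝒮.inv t') (𝒮.inv (𝒮.mul (𝒮.inv δ) γ)) := 𝒮.inv_mul_rev hcε
      have hstep1 : 𝒮.mul t' (𝒮.inv (𝒮.mul (𝒮.mul (𝒮.inv δ) γ) t'))
          = 𝒮.inv (𝒮.mul (𝒮.inv δ) γ) := by
        rw [hstep0, ← 𝒮.mul_assoc' _ _ _ (𝒮.rng_inv t').symm
          (by rw [𝒮.src_inv, 𝒮.rng_inv, hcε]), 𝒮.mul_inv,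
          𝒮.unit_mul' (by rw [𝒮.rng_inv, hcε])]
      have hstep2 : 𝒮.inv (𝒮.mul (𝒮.inv δ) γ) = 𝒮.mul (𝒮.inv γ) δ := by
        rw [𝒮.inv_mul_rev (by rw [𝒮.src_inv, hδA']), 𝒮.inv_inv]
      have hstep3 : 𝒮.mul γ (𝒮.mul (𝒮.inv γ) δ) = δ := by
        rw [← 𝒮.mul_assoc' _ _ _ (𝒮.rng_inv γ).symm (by rw [𝒮.src_inv, hδA']), 𝒮.mul_inv,
          𝒮.unit_mul' hδA']
      rw [hstep1, hstep2, hstep3]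
  · -- values
    intro q hq
    have hq1' : 𝒮.src q = 𝒮.src t' := hq.1.trans hsζ
    have hcominvq : 𝒮.src t' = 𝒮.rng (𝒮.inv q) := by rw [𝒮.rng_inv, hq1']
    have hst'q : 𝒮.src (𝒮.mul t' (𝒮.inv q)) = 𝒮.rng q := by
      rw [𝒮.src_mul _ _ hcominvq, 𝒮.src_inv]
    have hrt'q : 𝒮.rng (𝒮.mul t' (𝒮.inv q)) = 𝒮.rng t' := 𝒮.rng_mul _ _ hcominvq
    have hcomγ : 𝒮.src γ = 𝒮.rng (𝒮.mul t' (𝒮.inv q)) := by rw [hrt'q]; exact hcomp1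
    have hsgq : 𝒮.src (𝒮.mul γ (𝒮.mul t' (𝒮.inv q))) = 𝒮.rng q := by
      rw [𝒮.src_mul _ _ hcomγ, hst'q]
    have hrgq : 𝒮.rng (𝒮.mul γ (𝒮.mul t' (𝒮.inv q))) = 𝒮.rng t := by
      rw [𝒮.rng_mul _ _ hcomγ, hγr]
    have hcomqt' : 𝒮.src q = 𝒮.rng (𝒮.inv t') := by rw [𝒮.rng_inv, hq1']
    have hrqt' : 𝒮.rng (𝒮.mul q (𝒮.inv t')) = 𝒮.rng q := 𝒮.rng_mul _ _ hcomqt'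
    -- (Idψ)
    have hIdψ : 𝒮.mul (𝒮.mul (𝒮.inv t) (𝒮.mul γ t')) (𝒮.inv q)
        = 𝒮.mul (𝒮.inv t) (𝒮.mul γ (𝒮.mul t' (𝒮.inv q))) := by
      rw [𝒮.mul_assoc' _ _ _ hcomp2 (by rw [hsγt', 𝒮.rng_inv, hq1']),
        𝒮.mul_assoc' _ _ _ hcomp1 hcominvq]
    -- (Idφ)
    have hmulgq : 𝒮.mul (𝒮.mul γ (𝒮.mul t' (𝒮.inv q))) (𝒮.mul q (𝒮.inv t')) = γ := by
      rw [𝒮.mul_assoc' _ _ _ hcomγ (by rw [hst'q, hrqt'])]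
      have hinner : 𝒮.mul (𝒮.mul t' (𝒮.inv q)) (𝒮.mul q (𝒮.inv t')) = 𝒮.rng t' := by
        rw [𝒮.mul_assoc' _ _ _ hcominvq (by rw [𝒮.src_inv, hrqt'])]
        rw [𝒮.invmul_of_mul_eq hcomqt' rfl, 𝒮.mul_inv]
      rw [hinner, 𝒮.mul_unit' hcomp1]
    have hIdφ : 𝒮.mul (𝒮.inv (𝒮.mul γ (𝒮.mul t' (𝒮.inv q)))) γ = 𝒮.mul q (𝒮.inv t') :=
      𝒮.invmul_of_mul_eq (by rw [hsgq, hrqt']) hmulgq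
    have hε't' : 𝒮.mul (𝒮.mul q (𝒮.inv t')) t' = q := by
      rw [𝒮.mul_assoc' _ _ _ hcomqt' (𝒮.src_inv t'), 𝒮.inv_mul, 𝒮.mul_unit' hq1']
    -- cocycle values
    have hcgq : c (𝒮.mul γ (𝒮.mul t' (𝒮.inv q))) = c t' * (c q)⁻¹ := by
      rw [hc _ _ hcomγ, hc _ _ hcominvq, 𝒮.cocycle_inv hc, hγc, one_mul]
    have hcε' : c (𝒮.mul q (𝒮.inv t')) = c q * (c t')⁻¹ := by
      rw [hc _ _ hcomqt', 𝒮.cocycle_inv hc]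
    show psiL 𝒮 c n t (𝒮.mul γ (𝒮.mul t' (𝒮.inv q)))
        * phiL 𝒮 c m t' (𝒮.mul (𝒮.inv (𝒮.mul γ (𝒮.mul t' (𝒮.inv q)))) γ)
        = n (𝒮.mul (𝒮.mul (𝒮.inv t) (𝒮.mul γ t')) (𝒮.inv q)) * m q
    rw [hIdφ]
    by_cases hcq : c q = c t'
    · have hgqI : 𝒮.mul γ (𝒮.mul t' (𝒮.inv q)) ∈ IsoSet 𝒮 c (𝒮.rng t) :=
        ⟨by rw [hcgq, hcq, mul_inv_cancel], by rw [hsgq, hq.2], hrgq⟩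
      have hε'I : 𝒮.mul q (𝒮.inv t') ∈ IsoSet 𝒮 c (𝒮.rng t') :=
        ⟨by rw [hcε', hcq, mul_inv_cancel], by rw [𝒮.src_mul _ _ hcomqt', 𝒮.src_inv],
          by rw [hrqt', hq.2, hrt]⟩
      rw [psiL, Set.indicator_of_mem hgqI, phiL, Set.indicator_of_mem hε'I]
      rw [hε't', hIdψ]
    · have hmq : m q = 0 := by
        by_contra h0
        exact hcq ((hm q h0).trans hct'.symm)
      have hε'nI : 𝒮.mul q (𝒮.inv t') ∉ IsoSet 𝒮 c (𝒮.rng t') := by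
        intro hI
        apply hcq
        have := hI.1
        rw [hcε'] at this
        exact mul_inv_eq_one.mp this
      rw [phiL, Set.indicator_of_notMem hε'nI, hmq, mul_zero, mul_zero]

lemma H_phiL_psiL {𝒮 : GroupoidStruct G} {c : G → Γ} (hc : 𝒮.IsCocycle c) {g : Γ}
    {m n : G → R} (hm : InGrade c g m) {t γ : G} (hct : c t = g)
    (hγ : γ ∈ IsoSet 𝒮 c (𝒮.rng t)) :
    conv 𝒮 (phiL 𝒮 c m t) (psiL 𝒮 c n t) γ
      = ∑ᶠ p ∈ {p : G | 𝒮.src p = 𝒮.src t ∧ 𝒮.rng p = 𝒮.rng γ},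
          m p * n (𝒮.mul (𝒮.inv p) γ) := by
  obtain ⟨hγc, hγs, hγr⟩ := hγ
  rw [conv_apply_left]
  apply finsum_reindex_aux _ _ (fun p => 𝒮.mul p (𝒮.inv t))
  · -- InjOn
    intro p hp p' hp' he
    exact 𝒮.cancel_right (by rw [𝒮.rng_inv]; exact hp.1) (by rw [𝒮.rng_inv]; exact hp'.1) he
  · -- maps into A
    intro p hp
    show 𝒮.rng (𝒮.mul p (𝒮.inv t)) = 𝒮.rng γ
    rw [𝒮.rng_mul _ _ (by rw [𝒮.rng_inv]; exact hp.1)]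
    exact hp.2
  · -- support condition
    intro δ hδA hδne
    have hφ : phiL 𝒮 c m t δ ≠ 0 := left_ne_zero_of_mul hδne
    have hδI : δ ∈ IsoSet 𝒮 c (𝒮.rng t) := by
      by_contra h; exact hφ (Set.indicator_of_notMem h _)
    have hδA' : 𝒮.rng δ = 𝒮.rng γ := hδA
    have hcomp : 𝒮.src δ = 𝒮.rng t := hδI.2.1
    refine ⟨𝒮.mul δ t, ⟨?_, ?_⟩, ?_⟩
    · rw [𝒮.src_mul _ _ hcomp]
    · rw [𝒮.rng_mul _ _ hcomp, hδA']
    · exact 𝒮.mulinv_of_mul_eq hcomp rfl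
  · -- values
    intro p hp
    have hcomp : 𝒮.src p = 𝒮.rng (𝒮.inv t) := by rw [𝒮.rng_inv]; exact hp.1
    have hsδ : 𝒮.src (𝒮.mul p (𝒮.inv t)) = 𝒮.rng t := by
      rw [𝒮.src_mul _ _ hcomp, 𝒮.src_inv]
    have hrδ : 𝒮.rng (𝒮.mul p (𝒮.inv t)) = 𝒮.rng γ := by
      rw [𝒮.rng_mul _ _ hcomp]; exact hp.2
    have hIdφ : 𝒮.mul (𝒮.mul p (𝒮.inv t)) t = p := by
      rw [𝒮.mul_assoc' _ _ _ hcomp (𝒮.src_inv t), 𝒮.inv_mul, 𝒮.mul_unit' hp.1]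
    have hinvδ : 𝒮.inv (𝒮.mul p (𝒮.inv t)) = 𝒮.mul t (𝒮.inv p) := by
      rw [𝒮.inv_mul_rev hcomp, 𝒮.inv_inv]
    have hcompt : 𝒮.src t = 𝒮.rng (𝒮.inv p) := by rw [𝒮.rng_inv, hp.1]
    have hcompp : 𝒮.src (𝒮.inv p) = 𝒮.rng γ := by rw [𝒮.src_inv, hp.2]
    have hε : 𝒮.mul (𝒮.inv (𝒮.mul p (𝒮.inv t))) γ = 𝒮.mul t (𝒮.mul (𝒮.inv p) γ) := by
      rw [hinvδ, 𝒮.mul_assoc' _ _ _ hcompt hcompp]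
    have hrZ : 𝒮.src t = 𝒮.rng (𝒮.mul (𝒮.inv p) γ) := by
      rw [𝒮.rng_mul _ _ hcompp, 𝒮.rng_inv, hp.1]
    have hIdψ : 𝒮.mul (𝒮.inv t) (𝒮.mul t (𝒮.mul (𝒮.inv p) γ)) = 𝒮.mul (𝒮.inv p) γ :=
      𝒮.invmul_of_mul_eq hrZ rfl
    have hcδ : c (𝒮.mul p (𝒮.inv t)) = c p * (c t)⁻¹ := by
      rw [hc _ _ hcomp, 𝒮.cocycle_inv hc]
    have hcε : c (𝒮.mul t (𝒮.mul (𝒮.inv p) γ)) = c t * (c p)⁻¹ := by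
      rw [hc _ _ hrZ, hc _ _ hcompp, 𝒮.cocycle_inv hc, hγc, mul_one]
    show phiL 𝒮 c m t (𝒮.mul p (𝒮.inv t))
        * psiL 𝒮 c n t (𝒮.mul (𝒮.inv (𝒮.mul p (𝒮.inv t))) γ)
        = m p * n (𝒮.mul (𝒮.inv p) γ)
    rw [hε]
    by_cases hcp : c p = c t
    · have hδI : 𝒮.mul p (𝒮.inv t) ∈ IsoSet 𝒮 c (𝒮.rng t) :=
        ⟨by rw [hcδ, hcp, mul_inv_cancel], hsδ, by rw [hrδ, hγr]⟩
      have hεI : 𝒮.mul t (𝒮.mul (𝒮.inv p) γ) ∈ IsoSet 𝒮 c (𝒮.rng t) :=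
        ⟨by rw [hcε, hcp, mul_inv_cancel],
          by rw [𝒮.src_mul _ _ hrZ, 𝒮.src_mul _ _ hcompp, hγs],
          by rw [𝒮.rng_mul _ _ hrZ]⟩
      rw [phiL, Set.indicator_of_mem hδI, psiL, Set.indicator_of_mem hεI, hIdφ, hIdψ]
    · have hmp : m p = 0 := by
        by_contra h0
        exact hcp ((hm p h0).trans hct.symm)
      have hδnI : 𝒮.mul p (𝒮.inv t) ∉ IsoSet 𝒮 c (𝒮.rng t) := by
        intro hI
        apply hcp
        have := hI.1
        rw [hcδ] at this
        exact mul_inv_eq_one.mp this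
      rw [phiL, Set.indicator_of_notMem hδnI, hmp, zero_mul, zero_mul]

lemma H_phiR_psiR {𝒮 : GroupoidStruct G} {c : G → Γ} (hc : 𝒮.IsCocycle c) {g : Γ}
    {m n : G → R} (hm : InGrade c g m) {t t' γ : G} (hct : c t = g)
    (hst : 𝒮.src t' = 𝒮.src t) (hγ : γ ∈ IsoSet 𝒮 c (𝒮.src t)) :
    conv 𝒮 (phiR 𝒮 c m t) (psiR 𝒮 c n t') γ
      = ∑ᶠ p ∈ {p : G | 𝒮.src p = 𝒮.src t ∧ 𝒮.rng p = 𝒮.rng (𝒮.mul t (𝒮.mul γ (𝒮.inv t')))},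
          m p * n (𝒮.mul (𝒮.inv p) (𝒮.mul t (𝒮.mul γ (𝒮.inv t')))) := by
  obtain ⟨hγc, hγs, hγr⟩ := hγ
  have hcominv : 𝒮.src γ = 𝒮.rng (𝒮.inv t') := by rw [𝒮.rng_inv, hst, hγs]
  have hsγt'i : 𝒮.src (𝒮.mul γ (𝒮.inv t')) = 𝒮.rng t' := by
    rw [𝒮.src_mul _ _ hcominv, 𝒮.src_inv]
  have hrγt'i : 𝒮.rng (𝒮.mul γ (𝒮.inv t')) = 𝒮.src t := by
    rw [𝒮.rng_mul _ _ hcominv, hγr]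
  have hcompt : 𝒮.src t = 𝒮.rng (𝒮.mul γ (𝒮.inv t')) := hrγt'i.symm
  have hrζ : 𝒮.rng (𝒮.mul t (𝒮.mul γ (𝒮.inv t'))) = 𝒮.rng t := 𝒮.rng_mul _ _ hcompt
  rw [conv_apply_left]
  apply finsum_reindex_aux _ _ (fun p => 𝒮.mul (𝒮.inv t) p)
  · -- InjOn
    intro p hp p' hp' he
    have h1 : 𝒮.src (𝒮.inv t) = 𝒮.rng p := by rw [𝒮.src_inv, ← hrζ]; exact hp.2.symm
    have h1' : 𝒮.src (𝒮.inv t) = 𝒮.rng p' := by rw [𝒮.src_inv, ← hrζ]; exact hp'.2.symm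
    exact 𝒮.cancel_left h1 h1' he
  · -- maps into A
    intro p hp
    have h1 : 𝒮.src (𝒮.inv t) = 𝒮.rng p := by rw [𝒮.src_inv, ← hrζ]; exact hp.2.symm
    show 𝒮.rng (𝒮.mul (𝒮.inv t) p) = 𝒮.rng γ
    rw [𝒮.rng_mul _ _ h1, 𝒮.rng_inv, hγr]
  · -- support condition
    intro δ hδA hδne
    have hφ : phiR 𝒮 c m t δ ≠ 0 := left_ne_zero_of_mul hδne
    have hδI : δ ∈ IsoSet 𝒮 c (𝒮.src t) := by
      by_contra h; exact hφ (Set.indicator_of_notMem h _)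
    have hcomp : 𝒮.src t = 𝒮.rng δ := by rw [hδI.2.2]
    refine ⟨𝒮.mul t δ, ⟨?_, ?_⟩, ?_⟩
    · rw [𝒮.src_mul _ _ hcomp, hδI.2.1]
    · rw [𝒮.rng_mul _ _ hcomp, hrζ]
    · exact 𝒮.invmul_of_mul_eq hcomp rfl
  · -- values
    intro p hp
    have hp2' : 𝒮.rng p = 𝒮.rng t := hp.2.trans hrζ
    have hcomp : 𝒮.src (𝒮.inv t) = 𝒮.rng p := by rw [𝒮.src_inv, hp2']
    have hIdφ : 𝒮.mul t (𝒮.mul (𝒮.inv t) p) = p := mul_invmul 𝒮 hp2'.symm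
    have hinvδ : 𝒮.inv (𝒮.mul (𝒮.inv t) p) = 𝒮.mul (𝒮.inv p) t := by
      rw [𝒮.inv_mul_rev hcomp, 𝒮.inv_inv]
    have hsδ : 𝒮.src (𝒮.mul (𝒮.inv t) p) = 𝒮.src p := 𝒮.src_mul _ _ hcomp
    have hrδ : 𝒮.rng (𝒮.mul (𝒮.inv t) p) = 𝒮.src t := by
      rw [𝒮.rng_mul _ _ hcomp, 𝒮.rng_inv]
    have hc1 : 𝒮.src (𝒮.inv p) = 𝒮.rng t := by rw [𝒮.src_inv, hp2']
    have hc2 : 𝒮.src t = 𝒮.rng γ := by rw [hγr]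
    have hε : 𝒮.mul (𝒮.inv (𝒮.mul (𝒮.inv t) p)) γ = 𝒮.mul (𝒮.inv p) (𝒮.mul t γ) := by
      rw [hinvδ, 𝒮.mul_assoc' _ _ _ hc1 hc2]
    have hc3 : 𝒮.src (𝒮.inv p) = 𝒮.rng (𝒮.mul t γ) := by
      rw [𝒮.src_inv, hp2', 𝒮.rng_mul _ _ hc2]
    have hc4 : 𝒮.src (𝒮.mul t γ) = 𝒮.rng (𝒮.inv t') := by
      rw [𝒮.src_mul _ _ hc2, hγs, 𝒮.rng_inv, hst]
    have hζassoc : 𝒮.mul (𝒮.mul t γ) (𝒮.inv t') = 𝒮.mul t (𝒮.mul γ (𝒮.inv t')) :=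
      𝒮.mul_assoc' _ _ _ hc2 hcominv
    have hψarg : 𝒮.mul (𝒮.mul (𝒮.inv p) (𝒮.mul t γ)) (𝒮.inv t')
        = 𝒮.mul (𝒮.inv p) (𝒮.mul t (𝒮.mul γ (𝒮.inv t'))) := by
      rw [𝒮.mul_assoc' _ _ _ hc3 hc4, hζassoc]
    have hcδ : c (𝒮.mul (𝒮.inv t) p) = (c t)⁻¹ * c p := by
      rw [hc _ _ hcomp, 𝒮.cocycle_inv hc]
    have hcε : c (𝒮.mul (𝒮.inv p) (𝒮.mul t γ)) = (c p)⁻¹ * c t := by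
      rw [hc _ _ hc3, hc _ _ hc2, 𝒮.cocycle_inv hc, hγc, mul_one]
    show phiR 𝒮 c m t (𝒮.mul (𝒮.inv t) p)
        * psiR 𝒮 c n t' (𝒮.mul (𝒮.inv (𝒮.mul (𝒮.inv t) p)) γ)
        = m p * n (𝒮.mul (𝒮.inv p) (𝒮.mul t (𝒮.mul γ (𝒮.inv t'))))
    rw [hε]
    by_cases hcp : c p = c t
    · have hδI : 𝒮.mul (𝒮.inv t) p ∈ IsoSet 𝒮 c (𝒮.src t) :=
        ⟨by rw [hcδ, hcp, inv_mul_cancel], by rw [hsδ, hp.1], hrδ⟩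
      have hεI : 𝒮.mul (𝒮.inv p) (𝒮.mul t γ) ∈ IsoSet 𝒮 c (𝒮.src t') :=
        ⟨by rw [hcε, hcp, inv_mul_cancel],
          by rw [𝒮.src_mul _ _ hc3, 𝒮.src_mul _ _ hc2, hγs, hst],
          by rw [𝒮.rng_mul _ _ hc3, 𝒮.rng_inv, hp.1, hst]⟩
      rw [phiR, Set.indicator_of_mem hδI, psiR, Set.indicator_of_mem hεI, hIdφ, hψarg]
    · have hmp : m p = 0 := by
        by_contra h0
        exact hcp ((hm p h0).trans hct.symm)
      have hδnI : 𝒮.mul (𝒮.inv t) p ∉ IsoSet 𝒮 c (𝒮.src t) := by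
        intro hI
        apply hcp
        have := hI.1
        rw [hcδ] at this
        exact (inv_mul_eq_one.mp this).symm
      rw [phiR, Set.indicator_of_notMem hδnI, hmp, zero_mul, zero_mul]
lemma H_psiR_phiR {𝒮 : GroupoidStruct G} {c : G → Γ} (hc : 𝒮.IsCocycle c) {g : Γ}
    {m n : G → R} (hm : InGrade c g m) {t γ : G} (hct : c t = g)
    (hγ : γ ∈ IsoSet 𝒮 c (𝒮.src t)) :
    conv 𝒮 (psiR 𝒮 c n t) (phiR 𝒮 c m t) γ
      = ∑ᶠ q ∈ {q : G | 𝒮.src q = 𝒮.src γ ∧ 𝒮.rng q = 𝒮.rng t},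
          n (𝒮.mul γ (𝒮.inv q)) * m q := by
  obtain ⟨hγc, hγs, hγr⟩ := hγ
  rw [conv_apply_left]
  apply finsum_reindex_aux _ _ (fun q => 𝒮.mul (𝒮.mul γ (𝒮.inv q)) t)
  · -- InjOn
    intro q hq q' hq' he
    have hc1 : 𝒮.src γ = 𝒮.rng (𝒮.inv q) := by rw [𝒮.rng_inv, hq.1]
    have hc1' : 𝒮.src γ = 𝒮.rng (𝒮.inv q') := by rw [𝒮.rng_inv, hq'.1]
    have hc2 : 𝒮.src (𝒮.mul γ (𝒮.inv q)) = 𝒮.rng t := by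
      rw [𝒮.src_mul _ _ hc1, 𝒮.src_inv, hq.2]
    have hc2' : 𝒮.src (𝒮.mul γ (𝒮.inv q')) = 𝒮.rng t := by
      rw [𝒮.src_mul _ _ hc1', 𝒮.src_inv, hq'.2]
    have h2 := 𝒮.cancel_right hc2 hc2' he
    have h3 := 𝒮.cancel_left hc1 hc1' h2
    have h4 := congrArg 𝒮.inv h3
    rwa [𝒮.inv_inv, 𝒮.inv_inv] at h4
  · -- maps into A
    intro q hq
    have hc1 : 𝒮.src γ = 𝒮.rng (𝒮.inv q) := by rw [𝒮.rng_inv, hq.1]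
    have hc2 : 𝒮.src (𝒮.mul γ (𝒮.inv q)) = 𝒮.rng t := by
      rw [𝒮.src_mul _ _ hc1, 𝒮.src_inv, hq.2]
    show 𝒮.rng (𝒮.mul (𝒮.mul γ (𝒮.inv q)) t) = 𝒮.rng γ
    rw [𝒮.rng_mul _ _ hc2, 𝒮.rng_mul _ _ hc1]
  · -- support condition
    intro δ hδA hδne
    have hψ : psiR 𝒮 c n t δ ≠ 0 := left_ne_zero_of_mul hδne
    have hφ : phiR 𝒮 c m t (𝒮.mul (𝒮.inv δ) γ) ≠ 0 := right_ne_zero_of_mul hδne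
    have hδI : δ ∈ IsoSet 𝒮 c (𝒮.src t) := by
      by_contra h; exact hψ (Set.indicator_of_notMem h _)
    have hεI : 𝒮.mul (𝒮.inv δ) γ ∈ IsoSet 𝒮 c (𝒮.src t) := by
      by_contra h; exact hφ (Set.indicator_of_notMem h _)
    have hδA' : 𝒮.rng δ = 𝒮.rng γ := hδA
    have hcomptε : 𝒮.src t = 𝒮.rng (𝒮.mul (𝒮.inv δ) γ) := by rw [hεI.2.2]
    refine ⟨𝒮.mul t (𝒮.mul (𝒮.inv δ) γ), ⟨?_, ?_⟩, ?_⟩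
    · rw [𝒮.src_mul _ _ hcomptε, hεI.2.1, hγs]
    · rw [𝒮.rng_mul _ _ hcomptε]
    · show 𝒮.mul (𝒮.mul γ (𝒮.inv (𝒮.mul t (𝒮.mul (𝒮.inv δ) γ)))) t = δ
      have hi1 : 𝒮.inv (𝒮.mul t (𝒮.mul (𝒮.inv δ) γ))
          = 𝒮.mul (𝒮.inv (𝒮.mul (𝒮.inv δ) γ)) (𝒮.inv t) := 𝒮.inv_mul_rev hcomptε
      have hi2 : 𝒮.inv (𝒮.mul (𝒮.inv δ) γ) = 𝒮.mul (𝒮.inv γ) δ := by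
        rw [𝒮.inv_mul_rev (by rw [𝒮.src_inv, hδA']), 𝒮.inv_inv]
      have hcab : 𝒮.src (𝒮.inv γ) = 𝒮.rng δ := by rw [𝒮.src_inv, hδA']
      have hi3 : 𝒮.mul γ (𝒮.mul (𝒮.mul (𝒮.inv γ) δ) (𝒮.inv t))
          = 𝒮.mul (𝒮.mul γ (𝒮.mul (𝒮.inv γ) δ)) (𝒮.inv t) :=
        (𝒮.mul_assoc' γ (𝒮.mul (𝒮.inv γ) δ) (𝒮.inv t)
          (by rw [𝒮.rng_mul _ _ hcab, 𝒮.rng_inv])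
          (by rw [𝒮.src_mul _ _ hcab, 𝒮.rng_inv]; exact hδI.2.1)).symm
      have hi4 : 𝒮.mul γ (𝒮.mul (𝒮.inv γ) δ) = δ := by
        rw [← 𝒮.mul_assoc' _ _ _ (𝒮.rng_inv γ).symm (by rw [𝒮.src_inv, hδA']), 𝒮.mul_inv,
          𝒮.unit_mul' hδA']
      rw [hi1, hi2, hi3, hi4]
      rw [𝒮.mul_assoc' _ _ _ (by rw [hδI.2.1, 𝒮.rng_inv]) (𝒮.src_inv t), 𝒮.inv_mul,
        𝒮.mul_unit' hδI.2.1]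
  · -- values
    intro q hq
    have hc1 : 𝒮.src γ = 𝒮.rng (𝒮.inv q) := by rw [𝒮.rng_inv, hq.1]
    have hsγq : 𝒮.src (𝒮.mul γ (𝒮.inv q)) = 𝒮.rng t := by
      rw [𝒮.src_mul _ _ hc1, 𝒮.src_inv, hq.2]
    have hrγq : 𝒮.rng (𝒮.mul γ (𝒮.inv q)) = 𝒮.rng γ := 𝒮.rng_mul _ _ hc1
    have hsδ : 𝒮.src (𝒮.mul (𝒮.mul γ (𝒮.inv q)) t) = 𝒮.src t := 𝒮.src_mul _ _ hsγq
    have hrδ : 𝒮.rng (𝒮.mul (𝒮.mul γ (𝒮.inv q)) t) = 𝒮.rng γ := by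
      rw [𝒮.rng_mul _ _ hsγq, hrγq]
    have hψarg : 𝒮.mul (𝒮.mul (𝒮.mul γ (𝒮.inv q)) t) (𝒮.inv t) = 𝒮.mul γ (𝒮.inv q) :=
      𝒮.mulinv_of_mul_eq hsγq rfl
    have hctq : 𝒮.src (𝒮.inv t) = 𝒮.rng q := by rw [𝒮.src_inv, hq.2]
    have htiq : 𝒮.rng (𝒮.mul (𝒮.inv t) q) = 𝒮.src t := by
      rw [𝒮.rng_mul _ _ hctq, 𝒮.rng_inv]
    have hIdφpre : 𝒮.mul (𝒮.mul (𝒮.mul γ (𝒮.inv q)) t) (𝒮.mul (𝒮.inv t) q) = γ := by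
      rw [𝒮.mul_assoc' _ _ _ hsγq (by rw [htiq])]
      rw [mul_invmul 𝒮 hq.2.symm]
      rw [𝒮.mul_assoc' _ _ _ hc1 (𝒮.src_inv q), 𝒮.inv_mul, 𝒮.mul_unit' hq.1.symm]
    have hIdφ : 𝒮.mul (𝒮.inv (𝒮.mul (𝒮.mul γ (𝒮.inv q)) t)) γ = 𝒮.mul (𝒮.inv t) q :=
      𝒮.invmul_of_mul_eq (by rw [hsδ, htiq]) hIdφpre
    have hφval : 𝒮.mul t (𝒮.mul (𝒮.inv t) q) = q := mul_invmul 𝒮 hq.2.symm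
    have hcδ : c (𝒮.mul (𝒮.mul γ (𝒮.inv q)) t) = (c q)⁻¹ * c t := by
      rw [hc _ _ hsγq, hc _ _ hc1, 𝒮.cocycle_inv hc, hγc, one_mul]
    have hcε : c (𝒮.mul (𝒮.inv t) q) = (c t)⁻¹ * c q := by
      rw [hc _ _ hctq, 𝒮.cocycle_inv hc]
    show psiR 𝒮 c n t (𝒮.mul (𝒮.mul γ (𝒮.inv q)) t)
        * phiR 𝒮 c m t (𝒮.mul (𝒮.inv (𝒮.mul (𝒮.mul γ (𝒮.inv q)) t)) γ)
        = n (𝒮.mul γ (𝒮.inv q)) * m q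
    rw [hIdφ]
    by_cases hcq : c q = c t
    · have hδI : 𝒮.mul (𝒮.mul γ (𝒮.inv q)) t ∈ IsoSet 𝒮 c (𝒮.src t) :=
        ⟨by rw [hcδ, hcq, inv_mul_cancel], hsδ, by rw [hrδ, hγr]⟩
      have hεI : 𝒮.mul (𝒮.inv t) q ∈ IsoSet 𝒮 c (𝒮.src t) :=
        ⟨by rw [hcε, hcq, inv_mul_cancel], by rw [𝒮.src_mul _ _ hctq, hq.1, hγs], htiq⟩
      rw [psiR, Set.indicator_of_mem hδI, phiR, Set.indicator_of_mem hεI, hψarg, hφval]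
    · have hmq : m q = 0 := by
        by_contra h0
        exact hcq ((hm q h0).trans hct.symm)
      have hεnI : 𝒮.mul (𝒮.inv t) q ∉ IsoSet 𝒮 c (𝒮.src t) := by
        intro hI
        apply hcq
        have := hI.1
        rw [hcε] at this
        exact (inv_mul_eq_one.mp this).symm
      rw [phiR, Set.indicator_of_notMem hεnI, hmq, mul_zero, mul_zero]

end CoreH
section Core4

open Function Set GroupoidStruct

variable {G : Type*} [TopologicalSpace G] [T2Space G] {R : Type*} [CommRing R] [IsDomain R]
  {Γ : Type*} [Group Γ]

lemma conv_zero_right (𝒮 : GroupoidStruct G) (a : G → R) : conv 𝒮 a (0 : G → R) = 0 := by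
  funext η
  show conv 𝒮 a (0 : G → R) η = 0
  apply conv_eq_zero_of
  intro p q _ _
  show a p * (0 : G → R) q = 0
  rw [Pi.zero_apply, mul_zero]

lemma conv_zero_left (𝒮 : GroupoidStruct G) (b : G → R) : conv 𝒮 (0 : G → R) b = 0 := by
  funext η
  show conv 𝒮 (0 : G → R) b η = 0
  apply conv_eq_zero_of
  intro p q _ _
  show (0 : G → R) p * b q = 0
  rw [Pi.zero_apply, zero_mul]

lemma conv_ind_ind (𝒮 : GroupoidStruct G) {w : G} (hw : w ∈ 𝒮.units) (r r' : R) :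
    conv 𝒮 (Set.indicator {w} (fun _ => r)) (Set.indicator {w} (fun _ => r'))
      = Set.indicator {w} (fun _ => r * r') := by
  funext η
  have hsupp : Function.support (Set.indicator ({w} : Set G) (fun _ => r)) ⊆ 𝒮.units := by
    intro p hp
    have : p ∈ ({w} : Set G) := by
      by_contra h
      exact hp (Set.indicator_of_notMem h _)
    rwa [this]
  rw [conv_diag_left 𝒮 _ _ hsupp]
  rcases eq_or_ne η w with heq | hne
  · have h1 : Set.indicator ({w} : Set G) (fun _ => r) (𝒮.rng η) = r := by
      rw [heq, 𝒮.unit_rng hw]; exact Set.indicator_of_mem (show w ∈ ({w} : Set G) from rfl) _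
    have h2 : Set.indicator ({w} : Set G) (fun _ => r') η = r' := by
      rw [heq]; exact Set.indicator_of_mem (show w ∈ ({w} : Set G) from rfl) _
    have h3 : Set.indicator ({w} : Set G) (fun _ => r * r') η = r * r' := by
      rw [heq]; exact Set.indicator_of_mem (show w ∈ ({w} : Set G) from rfl) _
    rw [h1, h2, h3]
  · have h2 : Set.indicator ({w} : Set G) (fun _ => r') η = 0 :=
      Set.indicator_of_notMem (show η ∉ ({w} : Set G) from hne) _
    have h3 : Set.indicator ({w} : Set G) (fun _ => r * r') η = 0 :=
      Set.indicator_of_notMem (show η ∉ ({w} : Set G) from hne) _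
    rw [h2, h3, mul_zero]

lemma conv_ind_one (𝒮 : GroupoidStruct G) (c : G → Γ) {w : G} (hw : w ∈ 𝒮.units)
    {φ : G → R} (hφ : Function.support φ ⊆ IsoSet 𝒮 c w) :
    conv 𝒮 (Set.indicator {w} (fun _ => (1 : R))) φ = φ := by
  funext η
  have hsupp : Function.support (Set.indicator ({w} : Set G) (fun _ => (1 : R))) ⊆ 𝒮.units := by
    intro p hp
    have : p ∈ ({w} : Set G) := by
      by_contra h
      exact hp (Set.indicator_of_notMem h _)
    rwa [this]
  rw [conv_diag_left 𝒮 _ _ hsupp]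
  rcases eq_or_ne (φ η) 0 with h0 | h0
  · rw [h0, mul_zero]
  · have : 𝒮.rng η = w := (hφ h0).2.2
    rw [Set.indicator_of_mem (show 𝒮.rng η ∈ ({w} : Set G) from this), one_mul]

variable (𝒜 : AmpleGroupoid G) {c : G → Γ} {g : Γ} {m n : G → R}

/-- cross product ψ̂_t ⋆ φ̂_t′ vanishes when the sources differ -/
lemma P1_cross (hc : 𝒜.toGroupoidStruct.IsCocycle c) (hm : InGrade c g m)
    (hnorm : IsNormaliser 𝒜.toGroupoidStruct R m n) {t t' : G} (hct' : c t' = g)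
    (hrt : 𝒜.rng t' = 𝒜.rng t) (hst : 𝒜.src t ≠ 𝒜.src t') :
    conv 𝒜.toGroupoidStruct (psiL 𝒜.toGroupoidStruct c n t)
      (phiL 𝒜.toGroupoidStruct c m t') = 0 := by
  set 𝒮 := 𝒜.toGroupoidStruct with h𝒮
  funext γ
  by_cases hγ : γ ∈ IsoSet 𝒮 c (𝒮.rng t)
  · rw [H_psiL_phiL hc hm hct' hrt hγ]
    have hcomp1 : 𝒮.src γ = 𝒮.rng t' := by rw [hγ.2.1]; exact hrt.symm
    have hsγt' : 𝒮.src (𝒮.mul γ t') = 𝒮.src t' := 𝒮.src_mul _ _ hcomp1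
    have hrγt' : 𝒮.rng (𝒮.mul γ t') = 𝒮.rng t := by rw [𝒮.rng_mul _ _ hcomp1, hγ.2.2]
    have hcomp2 : 𝒮.src (𝒮.inv t) = 𝒮.rng (𝒮.mul γ t') := by rw [𝒮.src_inv, hrγt']
    have hsζ : 𝒮.src (𝒮.mul (𝒮.inv t) (𝒮.mul γ t')) = 𝒮.src t' := by
      rw [𝒮.src_mul _ _ hcomp2, hsγt']
    have hrζ : 𝒮.rng (𝒮.mul (𝒮.inv t) (𝒮.mul γ t')) = 𝒮.src t := by
      rw [𝒮.rng_mul _ _ hcomp2, 𝒮.rng_inv]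
    have hζu : 𝒮.mul (𝒮.inv t) (𝒮.mul γ t') ∉ 𝒮.units := by
      intro hu
      apply hst
      rw [← hrζ, 𝒮.unit_rng hu, ← 𝒮.unit_src hu, hsζ]
    exact E_vanish 𝒜 hnorm hζu (𝒮.rng_mem_units t)
  · exact conv_iso_zero 𝒮 c hc (psiL_supp 𝒮 c n t)
      (by rw [← hrt]; exact phiL_supp 𝒮 c m t') hγ

/-- diagonal product φ̂_t ⋆ ψ̂_t -/
lemma P2_diag (hc : 𝒜.toGroupoidStruct.IsCocycle c) (hm : InGrade c g m)
    (hnorm : IsNormaliser 𝒜.toGroupoidStruct R m n) {t : G} (hct : c t = g) :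
    conv 𝒜.toGroupoidStruct (phiL 𝒜.toGroupoidStruct c m t)
      (psiL 𝒜.toGroupoidStruct c n t)
      = Set.indicator {𝒜.rng t}
          (fun _ => Lam 𝒜.toGroupoidStruct m n (𝒜.src t) (𝒜.rng t)) := by
  set 𝒮 := 𝒜.toGroupoidStruct with h𝒮
  funext γ
  by_cases hγ : γ ∈ IsoSet 𝒮 c (𝒮.rng t)
  · rw [H_phiL_psiL hc hm hct hγ]
    rcases eq_or_ne γ (𝒮.rng t) with rfl | hne
    · rw [Set.indicator_of_mem (show 𝒮.rng t ∈ ({𝒮.rng t} : Set G) from rfl)]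
      have hset : {p : G | 𝒮.src p = 𝒮.src t ∧ 𝒮.rng p = 𝒮.rng (𝒮.rng t)}
          = {p : G | 𝒮.src p = 𝒮.src t ∧ 𝒮.rng p = 𝒮.rng t} := by
        ext p; rw [Set.mem_setOf_eq, Set.mem_setOf_eq, 𝒮.rng_rng t]
      rw [hset, Lam]
      refine finsum_mem_congr rfl fun p hp => ?_
      rw [𝒮.mul_unit' (show 𝒮.src (𝒮.inv p) = 𝒮.rng t by rw [𝒮.src_inv, hp.2])]
    · rw [Set.indicator_of_notMem (show γ ∉ ({𝒮.rng t} : Set G) from hne)]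
      exact F_vanish 𝒜 hnorm (iso_not_unit 𝒮 c hγ hne) (𝒮.src_mem_units t)
  · rw [Set.indicator_of_notMem (show γ ∉ ({𝒮.rng t} : Set G) by
      intro h
      exact hγ (by rw [show γ = 𝒮.rng t from h]; exact unit_mem_iso 𝒮 c hc (𝒮.rng_mem_units t)))]
    exact conv_iso_zero 𝒮 c hc (phiL_supp 𝒮 c m t) (psiL_supp 𝒮 c n t) hγ

/-- cross product φ_t ⋆ ψ_t′ vanishes when the ranges differ -/
lemma P3_cross (hc : 𝒜.toGroupoidStruct.IsCocycle c) (hm : InGrade c g m)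
    (hnorm : IsNormaliser 𝒜.toGroupoidStruct R m n) {t t' : G} (hct : c t = g)
    (hst : 𝒜.src t' = 𝒜.src t) (hrne : 𝒜.rng t ≠ 𝒜.rng t') :
    conv 𝒜.toGroupoidStruct (phiR 𝒜.toGroupoidStruct c m t)
      (psiR 𝒜.toGroupoidStruct c n t') = 0 := by
  set 𝒮 := 𝒜.toGroupoidStruct with h𝒮
  funext γ
  by_cases hγ : γ ∈ IsoSet 𝒮 c (𝒮.src t)
  · rw [H_phiR_psiR hc hm hct hst hγ]
    have hcominv : 𝒮.src γ = 𝒮.rng (𝒮.inv t') := by rw [𝒮.rng_inv, hst, hγ.2.1]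
    have hsγt'i : 𝒮.src (𝒮.mul γ (𝒮.inv t')) = 𝒮.rng t' := by
      rw [𝒮.src_mul _ _ hcominv, 𝒮.src_inv]
    have hrγt'i : 𝒮.rng (𝒮.mul γ (𝒮.inv t')) = 𝒮.src t := by
      rw [𝒮.rng_mul _ _ hcominv, hγ.2.2]
    have hcompt : 𝒮.src t = 𝒮.rng (𝒮.mul γ (𝒮.inv t')) := hrγt'i.symm
    have hsζ : 𝒮.src (𝒮.mul t (𝒮.mul γ (𝒮.inv t'))) = 𝒮.rng t' := by
      rw [𝒮.src_mul _ _ hcompt, hsγt'i]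
    have hrζ : 𝒮.rng (𝒮.mul t (𝒮.mul γ (𝒮.inv t'))) = 𝒮.rng t := 𝒮.rng_mul _ _ hcompt
    have hζu : 𝒮.mul t (𝒮.mul γ (𝒮.inv t')) ∉ 𝒮.units := by
      intro hu
      apply hrne
      rw [← hrζ, 𝒮.unit_rng hu, ← 𝒮.unit_src hu, hsζ]
    exact F_vanish 𝒜 hnorm hζu (𝒮.src_mem_units t)
  · exact conv_iso_zero 𝒮 c hc (phiR_supp 𝒮 c m t)
      (by rw [← hst]; exact psiR_supp 𝒮 c n t') hγ

/-- diagonal product φ_t ⋆ ψ_t -/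
lemma P3_diag (hc : 𝒜.toGroupoidStruct.IsCocycle c) (hm : InGrade c g m)
    (hnorm : IsNormaliser 𝒜.toGroupoidStruct R m n) {t : G} (hct : c t = g) :
    conv 𝒜.toGroupoidStruct (phiR 𝒜.toGroupoidStruct c m t)
      (psiR 𝒜.toGroupoidStruct c n t)
      = Set.indicator {𝒜.src t}
          (fun _ => Lam 𝒜.toGroupoidStruct m n (𝒜.src t) (𝒜.rng t)) := by
  set 𝒮 := 𝒜.toGroupoidStruct with h𝒮
  funext γ
  by_cases hγ : γ ∈ IsoSet 𝒮 c (𝒮.src t)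
  · rw [H_phiR_psiR hc hm hct rfl hγ]
    have hcominv : 𝒮.src γ = 𝒮.rng (𝒮.inv t) := by rw [𝒮.rng_inv, hγ.2.1]
    have hsγti : 𝒮.src (𝒮.mul γ (𝒮.inv t)) = 𝒮.rng t := by
      rw [𝒮.src_mul _ _ hcominv, 𝒮.src_inv]
    have hrγti : 𝒮.rng (𝒮.mul γ (𝒮.inv t)) = 𝒮.src t := by
      rw [𝒮.rng_mul _ _ hcominv, hγ.2.2]
    have hcompt : 𝒮.src t = 𝒮.rng (𝒮.mul γ (𝒮.inv t)) := hrγti.symm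
    have hsζ : 𝒮.src (𝒮.mul t (𝒮.mul γ (𝒮.inv t))) = 𝒮.rng t := by
      rw [𝒮.src_mul _ _ hcompt, hsγti]
    have hrζ : 𝒮.rng (𝒮.mul t (𝒮.mul γ (𝒮.inv t))) = 𝒮.rng t := 𝒮.rng_mul _ _ hcompt
    rcases eq_or_ne γ (𝒮.src t) with rfl | hne
    · rw [Set.indicator_of_mem (show 𝒮.src t ∈ ({𝒮.src t} : Set G) from rfl)]
      have hζval : 𝒮.mul t (𝒮.mul (𝒮.src t) (𝒮.inv t)) = 𝒮.rng t := by
        rw [𝒮.unit_mul' (show 𝒮.rng (𝒮.inv t) = 𝒮.src t from 𝒮.rng_inv t), 𝒮.mul_inv]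
      rw [hζval]
      have hset : {p : G | 𝒮.src p = 𝒮.src t ∧ 𝒮.rng p = 𝒮.rng (𝒮.rng t)}
          = {p : G | 𝒮.src p = 𝒮.src t ∧ 𝒮.rng p = 𝒮.rng t} := by
        ext p; rw [Set.mem_setOf_eq, Set.mem_setOf_eq, 𝒮.rng_rng t]
      rw [hset, Lam]
      refine finsum_mem_congr rfl fun p hp => ?_
      rw [𝒮.mul_unit' (show 𝒮.src (𝒮.inv p) = 𝒮.rng t by rw [𝒮.src_inv, hp.2])]
    · have hζu : 𝒮.mul t (𝒮.mul γ (𝒮.inv t)) ∉ 𝒮.units := by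
        intro hu
        apply hne
        have hζeq : 𝒮.mul t (𝒮.mul γ (𝒮.inv t)) = 𝒮.rng t := by
          rw [← hsζ, 𝒮.unit_src hu]
        have h2 : 𝒮.mul t (𝒮.mul γ (𝒮.inv t)) = 𝒮.mul t (𝒮.inv t) := by
          rw [hζeq, 𝒮.mul_inv]
        have h3 := 𝒮.cancel_left hcompt (𝒮.rng_inv t).symm h2
        have h4 : 𝒮.mul γ (𝒮.inv t) = 𝒮.mul (𝒮.src t) (𝒮.inv t) := by
          rw [h3, 𝒮.unit_mul' (𝒮.rng_inv t)]
        exact 𝒮.cancel_right hcominv (by rw [𝒮.rng_inv, 𝒮.src_src]) h4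
      rw [Set.indicator_of_notMem (show γ ∉ ({𝒮.src t} : Set G) from hne)]
      exact F_vanish 𝒜 hnorm hζu (𝒮.src_mem_units t)
  · rw [Set.indicator_of_notMem (show γ ∉ ({𝒮.src t} : Set G) by
      intro h
      exact hγ (by rw [show γ = 𝒮.src t from h]; exact unit_mem_iso 𝒮 c hc (𝒮.src_mem_units t)))]
    exact conv_iso_zero 𝒮 c hc (phiR_supp 𝒮 c m t) (psiR_supp 𝒮 c n t) hγ

/-- diagonal product ψ_t ⋆ φ_t -/
lemma P4_diag (hc : 𝒜.toGroupoidStruct.IsCocycle c) (hm : InGrade c g m)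
    (hnorm : IsNormaliser 𝒜.toGroupoidStruct R m n) {t : G} (hct : c t = g) :
    conv 𝒜.toGroupoidStruct (psiR 𝒜.toGroupoidStruct c n t)
      (phiR 𝒜.toGroupoidStruct c m t)
      = Set.indicator {𝒜.src t}
          (fun _ => Lam 𝒜.toGroupoidStruct m n (𝒜.src t) (𝒜.rng t)) := by
  set 𝒮 := 𝒜.toGroupoidStruct with h𝒮
  funext γ
  by_cases hγ : γ ∈ IsoSet 𝒮 c (𝒮.src t)
  · rw [H_psiR_phiR hc hm hct hγ]
    rcases eq_or_ne γ (𝒮.src t) with rfl | hne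
    · rw [Set.indicator_of_mem (show 𝒮.src t ∈ ({𝒮.src t} : Set G) from rfl)]
      have hset : {q : G | 𝒮.src q = 𝒮.src (𝒮.src t) ∧ 𝒮.rng q = 𝒮.rng t}
          = {q : G | 𝒮.src q = 𝒮.src t ∧ 𝒮.rng q = 𝒮.rng t} := by
        ext q; rw [Set.mem_setOf_eq, Set.mem_setOf_eq, 𝒮.src_src t]
      rw [hset, Lam]
      refine finsum_mem_congr rfl fun q hq => ?_
      rw [𝒮.unit_mul' (show 𝒮.rng (𝒮.inv q) = 𝒮.src t by rw [𝒮.rng_inv, hq.1]), mul_comm]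
    · rw [Set.indicator_of_notMem (show γ ∉ ({𝒮.src t} : Set G) from hne)]
      exact E_vanish 𝒜 hnorm (iso_not_unit 𝒮 c hγ hne) (𝒮.rng_mem_units t)
  · rw [Set.indicator_of_notMem (show γ ∉ ({𝒮.src t} : Set G) by
      intro h
      exact hγ (by rw [show γ = 𝒮.src t from h]; exact unit_mem_iso 𝒮 c hc (𝒮.src_mem_units t)))]
    exact conv_iso_zero 𝒮 c hc (psiR_supp 𝒮 c n t) (phiR_supp 𝒮 c m t) hγ

end Core4
section Core5

open Function Set GroupoidStruct

variable {G : Type*} [TopologicalSpace G] [T2Space G] {R : Type*} [CommRing R] [IsDomain R]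
  {Γ : Type*} [Group Γ]
variable (𝒜 : AmpleGroupoid G) {c : G → Γ} {g : Γ} {m n : G → R}

lemma fib_of_finite (𝒮 : GroupoidStruct G) {f : G → R} (h : (Function.support f).Finite) :
    ∀ y, ({p : G | 𝒮.rng p = y} ∩ Function.support f).Finite :=
  fun _ => h.subset Set.inter_subset_right

/-- column orthogonality -/
lemma orth_col (hc : 𝒜.toGroupoidStruct.IsCocycle c) (hm : InGrade c g m)
    (hnorm : IsNormaliser 𝒜.toGroupoidStruct R m n) {x x' w : G} (hne : x ≠ x')
    (h1 : Lam 𝒜.toGroupoidStruct m n x w ≠ 0)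
    (h2 : Lam 𝒜.toGroupoidStruct m n x' w ≠ 0) : False := by
  set 𝒮 := 𝒜.toGroupoidStruct with h𝒮
  obtain ⟨t, hts, htr, htm, htn⟩ := Lam_ne_zero_witness 𝒮 h1
  obtain ⟨t', hts', htr', htm', htn'⟩ := Lam_ne_zero_witness 𝒮 h2
  have hw : w ∈ 𝒮.units := by rw [← htr]; exact 𝒮.rng_mem_units t
  have hfφ := phiL_supp_finite 𝒮 c (m := m) t (fib_rng 𝒜 hnorm.1.2 _)
  have hfψ := psiL_supp_finite 𝒮 c (n := n) t (fib_src 𝒜 hnorm.2.1.2 _)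
  have hfφ' := phiL_supp_finite 𝒮 c (m := m) t' (fib_rng 𝒜 hnorm.1.2 _)
  have hfψ' := psiL_supp_finite 𝒮 c (n := n) t' (fib_src 𝒜 hnorm.2.1.2 _)
  have hA : conv 𝒮 (phiL 𝒮 c m t) (psiL 𝒮 c n t)
      = Set.indicator {w} (fun _ => Lam 𝒮 m n x w) := by
    have := P2_diag 𝒜 hc hm hnorm (hm t htm)
    rwa [hts, htr] at this
  have hB : conv 𝒮 (phiL 𝒮 c m t') (psiL 𝒮 c n t')
      = Set.indicator {w} (fun _ => Lam 𝒮 m n x' w) := by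
    have := P2_diag 𝒜 hc hm hnorm (hm t' htm')
    rwa [hts', htr'] at this
  have hcross : conv 𝒮 (psiL 𝒮 c n t) (phiL 𝒮 c m t') = 0 :=
    P1_cross 𝒜 hc hm hnorm (hm t' htm') (htr'.trans htr.symm)
      (by rw [hts, hts']; exact hne)
  have e1 : conv 𝒮 (conv 𝒮 (phiL 𝒮 c m t) (psiL 𝒮 c n t))
      (conv 𝒮 (phiL 𝒮 c m t') (psiL 𝒮 c n t'))
      = Set.indicator {w} (fun _ => Lam 𝒮 m n x w * Lam 𝒮 m n x' w) := by
    rw [hA, hB, conv_ind_ind 𝒮 hw]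
  have e2 : conv 𝒮 (conv 𝒮 (phiL 𝒮 c m t) (psiL 𝒮 c n t))
      (conv 𝒮 (phiL 𝒮 c m t') (psiL 𝒮 c n t')) = 0 := by
    rw [conv_assoc 𝒮 _ _ _ (fib_of_finite 𝒮 hfφ) (fib_of_finite 𝒮 hfψ),
      ← conv_assoc 𝒮 _ _ _ (fib_of_finite 𝒮 hfψ) (fib_of_finite 𝒮 hfφ'),
      hcross, conv_zero_left, conv_zero_right]
  rw [e2] at e1
  have := congrFun e1 w
  rw [Pi.zero_apply, Set.indicator_of_mem (show w ∈ ({w} : Set G) from rfl)] at this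
  exact mul_ne_zero h1 h2 this.symm

/-- row orthogonality -/
lemma orth_row (hc : 𝒜.toGroupoidStruct.IsCocycle c) (hm : InGrade c g m)
    (hnorm : IsNormaliser 𝒜.toGroupoidStruct R m n) {x w w' : G} (hne : w ≠ w')
    (h1 : Lam 𝒜.toGroupoidStruct m n x w ≠ 0)
    (h2 : Lam 𝒜.toGroupoidStruct m n x w' ≠ 0) : False := by
  set 𝒮 := 𝒜.toGroupoidStruct with h𝒮
  obtain ⟨t, hts, htr, htm, htn⟩ := Lam_ne_zero_witness 𝒮 h1
  obtain ⟨t', hts', htr', htm', htn'⟩ := Lam_ne_zero_witness 𝒮 h2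
  have hx : x ∈ 𝒮.units := by rw [← hts]; exact 𝒮.src_mem_units t
  have hfφ := phiR_supp_finite 𝒮 c (m := m) t (fib_src 𝒜 hnorm.1.2 _)
  have hfψ := psiR_supp_finite 𝒮 c (n := n) t (fib_rng 𝒜 hnorm.2.1.2 _)
  have hfφ' := phiR_supp_finite 𝒮 c (m := m) t' (fib_src 𝒜 hnorm.1.2 _)
  have hfψ' := psiR_supp_finite 𝒮 c (n := n) t' (fib_rng 𝒜 hnorm.2.1.2 _)
  have hA : conv 𝒮 (psiR 𝒮 c n t) (phiR 𝒮 c m t)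
      = Set.indicator {x} (fun _ => Lam 𝒮 m n x w) := by
    have := P4_diag 𝒜 hc hm hnorm (hm t htm)
    rwa [hts, htr] at this
  have hB : conv 𝒮 (psiR 𝒮 c n t') (phiR 𝒮 c m t')
      = Set.indicator {x} (fun _ => Lam 𝒮 m n x w') := by
    have := P4_diag 𝒜 hc hm hnorm (hm t' htm')
    rwa [hts', htr'] at this
  have hcross : conv 𝒮 (phiR 𝒮 c m t) (psiR 𝒮 c n t') = 0 :=
    P3_cross 𝒜 hc hm hnorm (hm t htm) (hts'.trans hts.symm)
      (by rw [htr, htr']; exact hne)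
  have e1 : conv 𝒮 (conv 𝒮 (psiR 𝒮 c n t) (phiR 𝒮 c m t))
      (conv 𝒮 (psiR 𝒮 c n t') (phiR 𝒮 c m t'))
      = Set.indicator {x} (fun _ => Lam 𝒮 m n x w * Lam 𝒮 m n x w') := by
    rw [hA, hB, conv_ind_ind 𝒮 hx]
  have e2 : conv 𝒮 (conv 𝒮 (psiR 𝒮 c n t) (phiR 𝒮 c m t))
      (conv 𝒮 (psiR 𝒮 c n t') (phiR 𝒮 c m t')) = 0 := by
    rw [conv_assoc 𝒮 _ _ _ (fib_of_finite 𝒮 hfψ) (fib_of_finite 𝒮 hfφ),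
      ← conv_assoc 𝒮 _ _ _ (fib_of_finite 𝒮 hfφ) (fib_of_finite 𝒮 hfψ'),
      hcross, conv_zero_left, conv_zero_right]
  rw [e2] at e1
  have := congrFun e1 x
  rw [Pi.zero_apply, Set.indicator_of_mem (show x ∈ ({x} : Set G) from rfl)] at this
  exact mul_ne_zero h1 h2 this.symm

/-- partition of `f(w)` into the `Lam x w` -/
lemma f_partition (hnorm : IsNormaliser 𝒜.toGroupoidStruct R m n) {w : G}
    (hw : w ∈ 𝒜.toGroupoidStruct.units) :
    ∃ T : Finset G, conv 𝒜.toGroupoidStruct m n w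
      = ∑ x ∈ T, Lam 𝒜.toGroupoidStruct m n x w := by
  classical
  set 𝒮 := 𝒜.toGroupoidStruct with h𝒮
  set F : G → R := fun p => m p * n (𝒮.inv p) with hF
  have hfin := fib_rng 𝒜 hnorm.1.2 w
  set T0 := hfin.toFinset with hT0
  have hT0mem : ∀ p, p ∈ T0 ↔ (𝒮.rng p = w ∧ m p ≠ 0) := fun p => hfin.mem_toFinset
  have step1 : conv 𝒮 m n w = ∑ᶠ p ∈ {p : G | 𝒮.rng p = w}, F p := by
    rw [conv_apply_left]
    have hset : {p : G | 𝒮.rng p = 𝒮.rng w} = {p : G | 𝒮.rng p = w} := by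
      ext p; rw [Set.mem_setOf_eq, Set.mem_setOf_eq, 𝒮.unit_rng hw]
    rw [hset]
    refine finsum_mem_congr rfl fun p hp => ?_
    rw [𝒮.mul_unit' (show 𝒮.src (𝒮.inv p) = w by rw [𝒮.src_inv]; exact hp)]
  have step2 : ∑ᶠ p ∈ {p : G | 𝒮.rng p = w}, F p = ∑ p ∈ T0, F p := by
    apply finsum_mem_eq_sum_of_inter_support_eq
    ext p
    constructor
    · rintro ⟨hr, hs⟩
      exact ⟨(hT0mem p).mpr ⟨hr, left_ne_zero_of_mul hs⟩, hs⟩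
    · rintro ⟨ht, hs⟩
      exact ⟨((hT0mem p).mp ht).1, hs⟩
  have step3 : ∑ p ∈ T0, F p
      = ∑ x ∈ T0.image 𝒮.src, ∑ p ∈ T0.filter (fun p => 𝒮.src p = x), F p :=
    (Finset.sum_fiberwise_of_maps_to (fun p hp => Finset.mem_image_of_mem _ hp) F).symm
  have step4 : ∀ x, ∑ p ∈ T0.filter (fun p => 𝒮.src p = x), F p = Lam 𝒮 m n x w := by
    intro x
    symm
    apply finsum_mem_eq_sum_of_inter_support_eq
    ext p
    constructor
    · rintro ⟨⟨hsx, hrw⟩, hs⟩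
      exact ⟨Finset.mem_filter.mpr ⟨(hT0mem p).mpr ⟨hrw, left_ne_zero_of_mul hs⟩, hsx⟩, hs⟩
    · rintro ⟨ht, hs⟩
      obtain ⟨h1, h2⟩ := Finset.mem_filter.mp ht
      exact ⟨⟨h2, ((hT0mem p).mp h1).1⟩, hs⟩
  refine ⟨T0.image 𝒮.src, ?_⟩
  rw [step1, step2, step3]
  exact Finset.sum_congr rfl fun x _ => step4 x

/-- the column result: every point of `supp m` realises `Lam = 1`, and the source is
determined by the range on `supp m`. -/
lemma col_result (hc : 𝒜.toGroupoidStruct.IsCocycle c) (hm : InGrade c g m)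
    (hnorm : IsNormaliser 𝒜.toGroupoidStruct R m n) {q : G} (hq : m q ≠ 0) :
    Lam 𝒜.toGroupoidStruct m n (𝒜.src q) (𝒜.rng q) = 1 ∧
    ∀ q', m q' ≠ 0 → 𝒜.rng q' = 𝒜.rng q → 𝒜.src q' = 𝒜.src q := by
  classical
  set 𝒮 := 𝒜.toGroupoidStruct with h𝒮
  set w := 𝒮.rng q with hwdef
  have hw : w ∈ 𝒮.units := 𝒮.rng_mem_units q
  have hfw : conv 𝒮 m n w = 1 := (f_diag 𝒜 hnorm).2 q hq
  obtain ⟨T, hpart⟩ := f_partition 𝒜 hnorm hw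
  have hex : ∃ x ∈ T, Lam 𝒮 m n x w ≠ 0 := by
    by_contra hcon
    push_neg at hcon
    rw [hpart, Finset.sum_eq_zero hcon] at hfw
    exact one_ne_zero hfw.symm
  obtain ⟨xs, hxsmem, hxs⟩ := hex
  have huniq : ∀ x, x ≠ xs → Lam 𝒮 m n x w = 0 := by
    intro x hxe
    by_contra h
    exact orth_col 𝒜 hc hm hnorm hxe h hxs
  have hval : Lam 𝒮 m n xs w = 1 := by
    rw [hpart] at hfw
    rw [← hfw]
    exact (Finset.sum_eq_single_of_mem xs hxsmem (fun b _ hb => huniq b hb)).symm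
  have hmain : ∀ q', m q' ≠ 0 → 𝒮.rng q' = w → 𝒮.src q' = xs := by
    intro q' hq' hrq'
    by_contra hne
    obtain ⟨p', hps', hpr', hpm', hpn'⟩ :=
      Lam_ne_zero_witness 𝒮 (show Lam 𝒮 m n xs w ≠ 0 by rw [hval]; exact one_ne_zero)
    have hP2 : conv 𝒮 (phiL 𝒮 c m p') (psiL 𝒮 c n p')
        = Set.indicator {w} (fun _ => (1 : R)) := by
      have := P2_diag 𝒜 hc hm hnorm (hm p' hpm')
      rwa [hps', hpr', hval] at this
    have hP1 : conv 𝒮 (psiL 𝒮 c n p') (phiL 𝒮 c m q') = 0 :=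
      P1_cross 𝒜 hc hm hnorm (hm q' hq') (hrq'.trans hpr'.symm)
        (by rw [hps']; exact fun h => hne h.symm)
    have hid : phiL 𝒮 c m q'
        = conv 𝒮 (Set.indicator {w} (fun _ => (1 : R))) (phiL 𝒮 c m q') := by
      symm
      apply conv_ind_one 𝒮 c hw
      rw [← hrq']
      exact phiL_supp 𝒮 c m q'
    rw [← hP2] at hid
    rw [conv_assoc 𝒮 _ _ _
      (fib_of_finite 𝒮 (phiL_supp_finite 𝒮 c (m := m) p' (fib_rng 𝒜 hnorm.1.2 _)))
      (fib_of_finite 𝒮 (psiL_supp_finite 𝒮 c (n := n) p' (fib_src 𝒜 hnorm.2.1.2 _)))] at hid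
    rw [hP1, conv_zero_right] at hid
    have hv : phiL 𝒮 c m q' w ≠ 0 := by
      rw [phiL, Set.indicator_of_mem (show w ∈ IsoSet 𝒮 c (𝒮.rng q') by
        rw [hrq']; exact unit_mem_iso 𝒮 c hc hw)]
      rw [𝒮.unit_mul' hrq']
      exact hq'
    rw [hid] at hv
    exact hv rfl
  constructor
  · rw [hmain q hq rfl]
    exact hval
  · intro q' h1 h2
    rw [hmain q' h1 h2, hmain q hq rfl]

end Core5
section Core6

open Function Set GroupoidStruct

variable {G : Type*} [TopologicalSpace G] [T2Space G] {R : Type*} [CommRing R] [IsDomain R]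
  {Γ : Type*} [Group Γ]
variable (𝒜 : AmpleGroupoid G) {c : G → Γ} {g : Γ} {m n : G → R}

/-- at a point of the nice dense set, the fibres of `supp m` are singletons -/
lemma fiber_singleton (hc : 𝒜.toGroupoidStruct.IsCocycle c) (hm : InGrade c g m)
    (hnorm : IsNormaliser 𝒜.toGroupoidStruct R m n) {u : G}
    (hGRN : GroupRingNice 𝒜.toGroupoidStruct c u R) {q q' : G}
    (hq : m q ≠ 0) (hq' : m q' ≠ 0) (hsq : 𝒜.src q = u) (hsq' : 𝒜.src q' = u) : q = q' := by
  set 𝒮 := 𝒜.toGroupoidStruct with h𝒮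
  have hu : u ∈ 𝒮.units := by rw [← hsq]; exact 𝒮.src_mem_units q
  have hrr : 𝒮.rng q' = 𝒮.rng q := by
    by_contra hne
    have l1 : Lam 𝒮 m n u (𝒮.rng q) = 1 := by
      rw [← hsq]; exact (col_result 𝒜 hc hm hnorm hq).1
    have l2 : Lam 𝒮 m n u (𝒮.rng q') = 1 := by
      rw [← hsq']; exact (col_result 𝒜 hc hm hnorm hq').1
    exact orth_row 𝒜 hc hm hnorm (fun h => hne h.symm)
      (by rw [l1]; exact one_ne_zero) (by rw [l2]; exact one_ne_zero)
  have hLam : Lam 𝒮 m n u (𝒮.rng q) = 1 := by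
    rw [← hsq]; exact (col_result 𝒜 hc hm hnorm hq).1
  have h3 := P3_diag 𝒜 hc hm hnorm (hm q hq)
  have h4 := P4_diag 𝒜 hc hm hnorm (hm q hq)
  rw [hsq, hLam] at h3 h4
  obtain ⟨v, η₀, hv, hη₀, hfeq⟩ := hGRN.2 (phiR 𝒮 c m q) (psiR 𝒮 c n q)
    (phiR_supp_finite 𝒮 c (m := m) q (fib_src 𝒜 hnorm.1.2 _))
    (psiR_supp_finite 𝒮 c (n := n) q (fib_rng 𝒜 hnorm.2.1.2 _))
    (by rw [← hsq]; exact phiR_supp 𝒮 c m q)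
    (by rw [← hsq]; exact psiR_supp 𝒮 c n q) h3 h4
  have hu_supp : phiR 𝒮 c m q u ≠ 0 := by
    rw [phiR, Set.indicator_of_mem (show u ∈ IsoSet 𝒮 c (𝒮.src q) by
      rw [hsq]; exact unit_mem_iso 𝒮 c hc hu)]
    rw [𝒮.mul_unit' hsq]
    exact hq
  have hη₀u : η₀ = u := by
    by_contra hne
    rw [hfeq] at hu_supp
    exact hu_supp (Set.indicator_of_notMem
      (show u ∉ ({η₀} : Set G) from fun h => hne ((show u = η₀ from h).symm)) _)
  have hcomb : 𝒮.mul q (𝒮.mul (𝒮.inv q) q') = q' := mul_invmul 𝒮 hrr.symm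
  have hmem : 𝒮.mul (𝒮.inv q) q' ∈ IsoSet 𝒮 c (𝒮.src q) := by
    have hcm : 𝒮.src (𝒮.inv q) = 𝒮.rng q' := by rw [𝒮.src_inv, hrr]
    refine ⟨?_, ?_, ?_⟩
    · rw [hc _ _ hcm, 𝒮.cocycle_inv hc, hm q hq, hm q' hq', inv_mul_cancel]
    · rw [𝒮.src_mul _ _ hcm, hsq', hsq]
    · rw [𝒮.rng_mul _ _ hcm, 𝒮.rng_inv]
  have hsupp2 : phiR 𝒮 c m q (𝒮.mul (𝒮.inv q) q') ≠ 0 := by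
    rw [phiR, Set.indicator_of_mem hmem, hcomb]
    exact hq'
  have hkey : 𝒮.mul (𝒮.inv q) q' = u := by
    by_contra hne
    rw [hfeq] at hsupp2
    refine hsupp2 (Set.indicator_of_notMem ?_ _)
    intro h
    exact hne ((show 𝒮.mul (𝒮.inv q) q' = η₀ from h).trans hη₀u)
  have hfinal : q' = 𝒮.mul q u := by rw [← hcomb, hkey]
  rw [𝒮.mul_unit' hsq] at hfinal
  exact hfinal.symm

/-- the master lemma -/
lemma master (hc : 𝒜.toGroupoidStruct.IsCocycle c) {X : Set G}
    (hXdense : 𝒜.toGroupoidStruct.units ⊆ closure X)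
    (hX : ∀ x ∈ X, GroupRingNice 𝒜.toGroupoidStruct c x R)
    (hnorm : IsNormaliser 𝒜.toGroupoidStruct R m n) (hm : InGrade c g m) :
    Set.InjOn 𝒜.src (Function.support m) ∧ Set.InjOn 𝒜.rng (Function.support m) ∧
    ∀ q, m q ≠ 0 → n (𝒜.inv q) ≠ 0 := by
  set 𝒮 := 𝒜.toGroupoidStruct with h𝒮
  have hinj_src : Set.InjOn 𝒮.src (Function.support m) := by
    intro q hq q' hq' he
    by_contra hne
    obtain ⟨u, huX, a, ha, b, hb, hab, hsa, hsb⟩ :=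
      perturb 𝒜.toEtaleGroupoid (supp_open hnorm.1.1) hq hq' hne he hXdense
    exact hab (fiber_singleton 𝒜 hc hm hnorm (hX u huX) ha hb hsa hsb)
  refine ⟨hinj_src, ?_, ?_⟩
  · intro q hq q' hq' he
    have hss := (col_result 𝒜 hc hm hnorm hq').2 q hq he
    exact hinj_src hq hq' hss
  · intro q hq
    have hLam : Lam 𝒮 m n (𝒮.src q) (𝒮.rng q) = 1 := (col_result 𝒜 hc hm hnorm hq).1
    obtain ⟨p, hps, hpr, hpm, hpn⟩ :=
      Lam_ne_zero_witness 𝒮 (show Lam 𝒮 m n (𝒮.src q) (𝒮.rng q) ≠ 0 by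
        rw [hLam]; exact one_ne_zero)
    have hpq : p = q := hinj_src hpm hq hps
    rwa [← hpq]

lemma IsNormaliser.swap {𝒮 : GroupoidStruct G} (h : IsNormaliser 𝒮 R m n) :
    IsNormaliser 𝒮 R n m :=
  ⟨h.2.1, h.1, fun d hd => ⟨(h.2.2.1 d hd).2, (h.2.2.1 d hd).1⟩, h.2.2.2.2, h.2.2.2.1⟩

end Core6

/-- Under the hypothesis that there is a dense subset `X ⊆ G⁰` such that the group ring
`R(c⁻¹(e) ∩ G_x^x)` has no zero-divisors and only trivial units for all `x ∈ X`, if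
`(m, n)` is a normaliser of `D_R(G)` with `m` of degree `g` and `n` of degree `g⁻¹`, then
`supp m` is a compact open bisection contained in `c⁻¹(g)` and `supp n = (supp m)⁻¹`. -/
theorem normaliser_support_bisection {G : Type*} [TopologicalSpace G] [T2Space G]
    {R : Type*} [CommRing R] [IsDomain R] (𝒢 : AmpleGroupoid G)
    {Γ : Type*} [Group Γ] (c : G → Γ) (hc : 𝒢.toGroupoidStruct.IsCocycle c)
    (hcont : IsLocallyConstant c)
    (X : Set G) (hXsub : X ⊆ GroupoidStruct.units 𝒢.toGroupoidStruct)
    (hXdense : GroupoidStruct.units 𝒢.toGroupoidStruct ⊆ closure X)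
    (hX : ∀ x ∈ X, GroupRingNice 𝒢.toGroupoidStruct c x R)
    (g : Γ) (m n : G → R)
    (hnorm : IsNormaliser 𝒢.toGroupoidStruct R m n)
    (hm : InGrade c g m) (hn : InGrade c g⁻¹ n) :
    IsCompact (Function.support m) ∧ IsOpen (Function.support m) ∧
    𝒢.toGroupoidStruct.IsBisection (Function.support m) ∧
    (∀ η ∈ Function.support m, c η = g) ∧
    Function.support n = 𝒢.toGroupoidStruct.inv '' Function.support m := by
  have hmaster := master 𝒢 hc hXdense hX hnorm hm
  have hmaster' := master 𝒢 hc hXdense hX hnorm.swap hn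
  refine ⟨hnorm.1.2, supp_open hnorm.1.1, ⟨hmaster.1, hmaster.2.1⟩, fun η hη => hm η hη, ?_⟩
  ext p
  constructor
  · intro hp
    have := hmaster'.2.2 p hp
    exact ⟨𝒢.toGroupoidStruct.inv p, this, 𝒢.toGroupoidStruct.inv_inv p⟩
  · rintro ⟨q, hq, rfl⟩
    exact hmaster.2.2 q hq
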